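/- arXiv:1001.3164 — 8 statements merged into one kernel-verified Lean document; each statement's English description precedes it below -/
import Mathlib

section
/- Let $V$ be a finite-dimensional complex vector space and let $G \le GL(V)$ be a finite subgroup generated by a set of reflections of order 2 (involutions whose fixed-point subspace is a hyperplane). Then the invariants of $G$ acting on the exterior algebra satisfy $(\Lambda V)^{G} = \Lambda (V^{G})$, where $V^{G} = \{v \in V : g v = v \text{ for all } g \in G\}$ and $\Lambda(V^G)$ denotes the image of the exterior algebra of $V^G$ under the map induced by the inclusion $V^G \hookrightarrow V$. -/
open ExteriorAlgebra Module

namespace ReflectionExteriorAux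

variable {V : Type*} [AddCommGroup V] [Module ℂ V]

/-- The exterior algebra of a subspace, viewed inside `Λ V`. -/
noncomputable abbrev eAlg (W : Submodule ℂ V) : Subalgebra ℂ (ExteriorAlgebra ℂ V) :=
  (ExteriorAlgebra.map W.subtype).range

lemma ι_mem {W : Submodule ℂ V} {w : V} (hw : w ∈ W) : ι ℂ w ∈ eAlg W :=
  ⟨ι ℂ (⟨w, hw⟩ : W), ExteriorAlgebra.map_apply_ι _ _⟩

lemma ctr_eq_zero {W : Submodule ℂ V} {f : Module.Dual ℂ V}
    (hf : ∀ w ∈ W, f w = 0) {x : ExteriorAlgebra ℂ V} (hx : x ∈ eAlg W) :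
    CliffordAlgebra.contractLeft (Q := (0 : QuadraticForm ℂ V)) f x = 0 := by
  obtain ⟨y, rfl⟩ := hx
  have key : ∀ y : ExteriorAlgebra ℂ W, ∀ b : ExteriorAlgebra ℂ V,
      CliffordAlgebra.contractLeft (Q := (0 : QuadraticForm ℂ V)) f b = 0 →
      CliffordAlgebra.contractLeft (Q := (0 : QuadraticForm ℂ V)) f
        (ExteriorAlgebra.map W.subtype y * b) = 0 := by
    intro y
    induction y using ExteriorAlgebra.induction with
    | algebraMap r =>
      intro b hb
      rw [AlgHom.commutes, ← Algebra.smul_def, map_smul, hb, smul_zero]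
    | ι w =>
      intro b hb
      rw [ExteriorAlgebra.map_apply_ι, CliffordAlgebra.contractLeft_ι_mul, hb, mul_zero,
        sub_zero]
      have : f (W.subtype w) = 0 := hf w.1 w.2
      rw [this, zero_smul]
    | mul a b ha hb =>
      intro c hc
      have hmm : (ExteriorAlgebra.map W.subtype) (a * b) * c
          = (ExteriorAlgebra.map W.subtype) a * ((ExteriorAlgebra.map W.subtype) b * c) := by
        rw [map_mul, mul_assoc]
      rw [hmm]
      exact ha _ (hb _ hc)
    | add a b ha hb =>
      intro c hc
      have hmm : (ExteriorAlgebra.map W.subtype) (a + b) * c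
          = (ExteriorAlgebra.map W.subtype) a * c + (ExteriorAlgebra.map W.subtype) b * c := by
        rw [map_add, add_mul]
      rw [hmm, map_add, ha _ hc, hb _ hc, add_zero]
  simpa using key y 1 (CliffordAlgebra.contractLeft_one _ _)

lemma mem_eAlg_top (x : ExteriorAlgebra ℂ V) : x ∈ eAlg (⊤ : Submodule ℂ V) := by
  induction x using ExteriorAlgebra.induction with
  | algebraMap r => exact Subalgebra.algebraMap_mem _ r
  | ι v => exact ι_mem trivial
  | mul a b ha hb => exact mul_mem ha hb
  | add a b ha hb => exact add_mem ha hb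

lemma decomp {W : Submodule ℂ V} {u : V} {x : ExteriorAlgebra ℂ V}
    (hx : x ∈ eAlg (W ⊔ (ℂ ∙ u))) :
    ∃ x₀ ∈ eAlg W, ∃ x₁ ∈ eAlg W, x = x₀ + ι ℂ u * x₁ := by
  obtain ⟨y, rfl⟩ := hx
  have key : ∀ y : ExteriorAlgebra ℂ (W ⊔ (ℂ ∙ u) : Submodule ℂ V),
      ∀ b : ExteriorAlgebra ℂ V,
      (∃ x₀ ∈ eAlg W, ∃ x₁ ∈ eAlg W, b = x₀ + ι ℂ u * x₁) →
      (∃ x₀ ∈ eAlg W, ∃ x₁ ∈ eAlg W,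
        ExteriorAlgebra.map (W ⊔ (ℂ ∙ u) : Submodule ℂ V).subtype y * b = x₀ + ι ℂ u * x₁) := by
    intro y
    induction y using ExteriorAlgebra.induction with
    | algebraMap r =>
      rintro b ⟨x₀, h₀, x₁, h₁, rfl⟩
      refine ⟨r • x₀, Subalgebra.smul_mem _ h₀ r, r • x₁, Subalgebra.smul_mem _ h₁ r, ?_⟩
      rw [AlgHom.commutes, ← Algebra.smul_def, smul_add, mul_smul_comm]
    | ι w =>
      rintro b ⟨x₀, h₀, x₁, h₁, rfl⟩
      obtain ⟨w', hw', z, hz, hw⟩ := Submodule.mem_sup.mp w.2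
      obtain ⟨c, rfl⟩ := Submodule.mem_span_singleton.mp hz
      refine ⟨ι ℂ w' * x₀, mul_mem (ι_mem hw') h₀,
        c • x₀ - ι ℂ w' * x₁, sub_mem (Subalgebra.smul_mem _ h₀ c) (mul_mem (ι_mem hw') h₁), ?_⟩
      have hanti : ι ℂ w' * ι ℂ u = -(ι ℂ u * ι ℂ w') := by
        rw [eq_neg_iff_add_eq_zero]
        exact ExteriorAlgebra.ι_add_mul_swap w' u
      have hwc : ((W ⊔ (ℂ ∙ u) : Submodule ℂ V).subtype w : V) = w' + c • u := hw.symm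
      have h1 : ι ℂ w' * (ι ℂ u * x₁) = -(ι ℂ u * (ι ℂ w' * x₁)) := by
        rw [← mul_assoc, hanti, neg_mul, mul_assoc]
      have h2 : ι ℂ u * (ι ℂ u * x₁) = 0 := by
        rw [← mul_assoc, ExteriorAlgebra.ι_sq_zero, zero_mul]
      rw [ExteriorAlgebra.map_apply_ι, hwc]
      simp only [map_add, map_smul, add_mul, smul_mul_assoc, mul_add, h1, h2, smul_zero,
        add_zero, mul_sub, mul_smul_comm, smul_add]
      abel
    | mul a b ha hb =>
      intro c hc
      have hmm : (ExteriorAlgebra.map (W ⊔ (ℂ ∙ u) : Submodule ℂ V).subtype) (a * b) * c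
          = (ExteriorAlgebra.map (W ⊔ (ℂ ∙ u) : Submodule ℂ V).subtype) a
            * ((ExteriorAlgebra.map (W ⊔ (ℂ ∙ u) : Submodule ℂ V).subtype) b * c) := by
        rw [map_mul, mul_assoc]
      rw [hmm]
      exact ha _ (hb _ hc)
    | add a b ha hb =>
      intro c hc
      obtain ⟨x₀, h₀, x₁, h₁, hh⟩ := ha _ hc
      obtain ⟨y₀, g₀, y₁, g₁, gg⟩ := hb _ hc
      refine ⟨x₀ + y₀, add_mem h₀ g₀, x₁ + y₁, add_mem h₁ g₁, ?_⟩
      have hmm : (ExteriorAlgebra.map (W ⊔ (ℂ ∙ u) : Submodule ℂ V).subtype) (a + b) * c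
          = (ExteriorAlgebra.map (W ⊔ (ℂ ∙ u) : Submodule ℂ V).subtype) a * c
            + (ExteriorAlgebra.map (W ⊔ (ℂ ∙ u) : Submodule ℂ V).subtype) b * c := by
        rw [map_add, add_mul]
      rw [hmm, hh, gg, mul_add]
      abel
  have h1 : (∃ x₀ ∈ eAlg W, ∃ x₁ ∈ eAlg W, (1 : ExteriorAlgebra ℂ V) = x₀ + ι ℂ u * x₁) :=
    ⟨1, one_mem _, 0, zero_mem _, by rw [mul_zero, add_zero]⟩
  simpa using key y 1 h1

lemma map_fixed {W : Submodule ℂ V} {g : V →ₗ[ℂ] V} (hg : ∀ w ∈ W, g w = w)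
    {x : ExteriorAlgebra ℂ V} (hx : x ∈ eAlg W) : ExteriorAlgebra.map g x = x := by
  obtain ⟨y, rfl⟩ := hx
  have h : (ExteriorAlgebra.map g).comp (ExteriorAlgebra.map W.subtype)
      = ExteriorAlgebra.map W.subtype := by
    rw [ExteriorAlgebra.map_comp_map]
    congr 1
    ext w
    exact hg w w.2
  exact DFunLike.congr_fun h y

lemma mem_of_ctr [FiniteDimensional ℂ V] {W : Submodule ℂ V} {x : ExteriorAlgebra ℂ V}
    (h : ∀ f : Module.Dual ℂ V, (∀ w ∈ W, f w = 0) →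
      CliffordAlgebra.contractLeft (Q := (0 : QuadraticForm ℂ V)) f x = 0) :
    x ∈ eAlg W := by
  suffices H : ∀ (k : ℕ) (W : Submodule ℂ V), finrank ℂ V - finrank ℂ W ≤ k →
      ∀ x : ExteriorAlgebra ℂ V, (∀ f : Module.Dual ℂ V, (∀ w ∈ W, f w = 0) →
        CliffordAlgebra.contractLeft (Q := (0 : QuadraticForm ℂ V)) f x = 0) → x ∈ eAlg W by
    exact H _ W le_rfl x h
  intro k
  induction k with
  | zero =>
    intro W hW x _
    have hle : finrank ℂ V ≤ finrank ℂ W := by omega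
    have : W = ⊤ := Submodule.eq_top_of_finrank_eq (le_antisymm (Submodule.finrank_le W) hle)
    rw [this]
    exact mem_eAlg_top x
  | succ k ih =>
    intro W hW x hx
    by_cases htop : W = ⊤
    · rw [htop]; exact mem_eAlg_top x
    obtain ⟨u, hu⟩ : ∃ u, u ∉ W := by
      by_contra hco
      push_neg at hco
      exact htop (Submodule.eq_top_iff'.mpr hco)
    obtain ⟨f, hfu, hfW⟩ := Submodule.exists_dual_map_eq_bot_of_notMem hu inferInstance
    have hfW' : ∀ w ∈ W, f w = 0 := fun w hw => by
      have : f w ∈ W.map f := Submodule.mem_map_of_mem hw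
      rwa [hfW, Submodule.mem_bot] at this
    have hlt : W < W ⊔ (ℂ ∙ u) := lt_of_le_of_ne le_sup_left
      (fun hq => hu (hq ▸ Submodule.mem_sup_right (Submodule.mem_span_singleton_self u)))
    have h1 : finrank ℂ W < finrank ℂ (W ⊔ (ℂ ∙ u) : Submodule ℂ V) :=
      Submodule.finrank_lt_finrank_of_lt hlt
    have h2 : finrank ℂ V - finrank ℂ (W ⊔ (ℂ ∙ u) : Submodule ℂ V) ≤ k := by
      have := Submodule.finrank_le (W ⊔ (ℂ ∙ u) : Submodule ℂ V)
      omega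
    have hx' : x ∈ eAlg (W ⊔ (ℂ ∙ u)) := ih (W ⊔ (ℂ ∙ u)) h2 x
      (fun f' hf' => hx f' (fun w hw => hf' w ((le_sup_left : W ≤ W ⊔ (ℂ ∙ u)) hw)))
    obtain ⟨x₀, h₀, x₁, h₁, rfl⟩ := decomp hx'
    set g : Module.Dual ℂ V := (f u)⁻¹ • f with hgdef
    have hgW : ∀ w ∈ W, g w = 0 := fun w hw => by
      rw [hgdef, LinearMap.smul_apply, hfW' w hw, smul_zero]
    have hgu : g u = 1 := by
      rw [hgdef, LinearMap.smul_apply, smul_eq_mul, inv_mul_cancel₀ hfu]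
    have hcomp : CliffordAlgebra.contractLeft (Q := (0 : QuadraticForm ℂ V)) g
        (x₀ + ι ℂ u * x₁) = x₁ := by
      rw [map_add, ctr_eq_zero hgW h₀, CliffordAlgebra.contractLeft_ι_mul,
        ctr_eq_zero hgW h₁, mul_zero, sub_zero, hgu, one_smul, zero_add]
    rw [hx g hgW] at hcomp
    rw [← hcomp, mul_zero, add_zero]
    exact h₀

lemma refl_step [FiniteDimensional ℂ V] {s : V ≃ₗ[ℂ] V} (hs1 : s ≠ 1) (hs2 : s * s = 1)
    (hH : finrank ℂ (LinearMap.ker (s.toLinearMap - LinearMap.id)) + 1 = finrank ℂ V)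
    {x : ExteriorAlgebra ℂ V} (hx : ExteriorAlgebra.map s.toLinearMap x = x) :
    x ∈ eAlg (LinearMap.ker (s.toLinearMap - LinearMap.id)) := by
  set H := LinearMap.ker (s.toLinearMap - LinearMap.id) with hHdef
  have memH : ∀ v : V, v ∈ H ↔ s v = v := fun v => by
    rw [hHdef, LinearMap.mem_ker, LinearMap.sub_apply, LinearMap.id_apply, sub_eq_zero]
    exact Iff.rfl
  obtain ⟨v, hv⟩ : ∃ v, s v ≠ v := by
    by_contra hco
    push_neg at hco
    exact hs1 (LinearEquiv.ext hco)
  set a := v - s v with ha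
  have hss : s (s v) = v := by
    have : (s * s) v = (1 : V ≃ₗ[ℂ] V) v := by rw [hs2]
    simpa using this
  have hsa : s a = -a := by
    rw [ha, map_sub, hss]
    abel
  have ha0 : a ≠ 0 := sub_ne_zero.mpr (Ne.symm hv)
  have haH : a ∉ H := by
    rw [memH, hsa]
    intro hq
    apply ha0
    have h2 : (2 : ℂ) • a = 0 := by
      rw [two_smul]
      nth_rewrite 1 [← hq]
      exact neg_add_cancel a
    rcases smul_eq_zero.mp h2 with h | h
    · exact absurd h two_ne_zero
    · exact h
  have htop : H ⊔ (ℂ ∙ a) = ⊤ := by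
    apply Submodule.eq_top_of_finrank_eq
    have hle := Submodule.finrank_le (H ⊔ (ℂ ∙ a) : Submodule ℂ V)
    have hlt : finrank ℂ H < finrank ℂ (H ⊔ (ℂ ∙ a) : Submodule ℂ V) :=
      Submodule.finrank_lt_finrank_of_lt (lt_of_le_of_ne le_sup_left
        (fun hq => haH (hq ▸ Submodule.mem_sup_right (Submodule.mem_span_singleton_self a))))
    omega
  have hxtop : x ∈ eAlg (H ⊔ (ℂ ∙ a)) := by rw [htop]; exact mem_eAlg_top x
  obtain ⟨x₀, h₀, x₁, h₁, rfl⟩ := decomp hxtop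
  have hfix : ∀ w ∈ H, s.toLinearMap w = w := fun w hw => (memH w).mp hw
  have hmx : ExteriorAlgebra.map s.toLinearMap (x₀ + ι ℂ a * x₁) = x₀ - ι ℂ a * x₁ := by
    rw [map_add, map_mul, map_fixed hfix h₀, map_fixed hfix h₁, ExteriorAlgebra.map_apply_ι]
    have : s.toLinearMap a = -a := hsa
    rw [this, map_neg, neg_mul, ← sub_eq_add_neg]
  rw [hmx] at hx
  have hneg : -(ι ℂ a * x₁) = ι ℂ a * x₁ := by
    have := hx
    rw [sub_eq_add_neg] at this
    exact add_left_cancel this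
  have h2 : (2 : ℂ) • (ι ℂ a * x₁) = 0 := by
    rw [two_smul]
    nth_rewrite 1 [← hneg]
    exact neg_add_cancel _
  have hz : ι ℂ a * x₁ = 0 := by
    rcases smul_eq_zero.mp h2 with h | h
    · exact absurd h two_ne_zero
    · exact h
  rw [hz, add_zero]
  exact h₀

end ReflectionExteriorAux

open ReflectionExteriorAux Module

/-- If a finite subgroup `G` of `GL(V)` is generated by reflections of
order 2, then the `G`-invariants of the exterior algebra `Λ V` equal the image of
`Λ (V^G)` under the map induced by the inclusion `V^G ↪ V`. -/
theorem exteriorAlgebra_invariants_of_reflection_group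
    {V : Type*} [AddCommGroup V] [Module ℂ V] [FiniteDimensional ℂ V]
    (G : Subgroup (V ≃ₗ[ℂ] V)) (hfin : (G : Set (V ≃ₗ[ℂ] V)).Finite)
    (S : Set (V ≃ₗ[ℂ] V)) (hgen : Subgroup.closure S = G)
    (hrefl : ∀ s ∈ S, s ≠ 1 ∧ s * s = 1 ∧
      Module.finrank ℂ (LinearMap.ker (s.toLinearMap - LinearMap.id)) + 1 =
        Module.finrank ℂ V)
    (VG : Submodule ℂ V) (hVG : ∀ v : V, v ∈ VG ↔ ∀ g ∈ G, g v = v) :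
    ∀ x : ExteriorAlgebra ℂ V,
      (∀ g ∈ G, ExteriorAlgebra.map ((g : V ≃ₗ[ℂ] V).toLinearMap) x = x) ↔
        x ∈ (ExteriorAlgebra.map (VG.subtype)).range := by
  intro x
  have hSsub : S ⊆ (G : Set (V ≃ₗ[ℂ] V)) := fun s hs => hgen ▸ Subgroup.subset_closure hs
  constructor
  · intro hx
    have hSfin : S.Finite := hfin.subset hSsub
    haveI : Finite ↥S := hSfin.to_subtype
    have hVGeq : VG = ⨅ s : S,
        LinearMap.ker ((s : V ≃ₗ[ℂ] V).toLinearMap - LinearMap.id) := by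
      apply le_antisymm
      · intro v hv
        refine Submodule.mem_iInf _ |>.mpr fun s => ?_
        rw [LinearMap.mem_ker, LinearMap.sub_apply, LinearMap.id_apply, sub_eq_zero]
        exact (hVG v).mp hv s (hSsub s.2)
      · intro v hv
        rw [hVG]
        intro g hg
        rw [← hgen] at hg
        refine Subgroup.closure_induction (p := fun g _ => g v = v) ?_ rfl ?_ ?_ hg
        · intro t ht
          have := Submodule.mem_iInf _ |>.mp hv ⟨t, ht⟩
          rw [LinearMap.mem_ker, LinearMap.sub_apply, LinearMap.id_apply, sub_eq_zero] at this
          exact this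
        · intro a b _ _ hpa hpb
          show a (b v) = v
          rw [hpb, hpa]
        · intro a _ hpa
          show a⁻¹ v = v
          conv_lhs => rw [← hpa]
          exact a.symm_apply_apply v
    apply mem_of_ctr
    intro f hf
    have hfann : f ∈ VG.dualAnnihilator := Submodule.mem_dualAnnihilator f |>.mpr hf
    rw [hVGeq, Subspace.dualAnnihilator_iInf_eq] at hfann
    refine Submodule.iSup_induction
      (motive := fun f' => CliffordAlgebra.contractLeft (Q := (0 : QuadraticForm ℂ V)) f' x = 0)
      _ hfann ?_ ?_ ?_
    · rintro ⟨t, ht⟩ f' hf'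
      show CliffordAlgebra.contractLeft (Q := (0 : QuadraticForm ℂ V)) f' x = 0
      obtain ⟨h1, h2, h3⟩ := hrefl t ht
      have hsx : ExteriorAlgebra.map t.toLinearMap x = x := hx t (hSsub ht)
      have hxH := refl_step h1 h2 h3 hsx
      exact ctr_eq_zero (fun w hw => (Submodule.mem_dualAnnihilator f').mp hf' w hw) hxH
    · show CliffordAlgebra.contractLeft (Q := (0 : QuadraticForm ℂ V)) (0 : Module.Dual ℂ V) x = 0
      rw [map_zero]
      exact LinearMap.zero_apply x
    · intro f₁ f₂ hh₁ hh₂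
      show CliffordAlgebra.contractLeft (Q := (0 : QuadraticForm ℂ V)) (f₁ + f₂) x = 0
      rw [map_add, LinearMap.add_apply, hh₁, hh₂, add_zero]
  · intro hx g hg
    exact map_fixed (fun w hw => (hVG w).mp hw g hg) hx
end

section
/- Let $k$ be a field, let $U$ be a $k$-vector space of finite dimension $s$, and let $A = \bigoplus_{i \ge 0} A_i$ be an $\mathbb{N}$-graded associative $k$-algebra. Let $\psi : \Lambda U \to A$ be a $k$-algebra homomorphism from the exterior algebra of $U$ such that $\psi(\Lambda^i U) \subseteq A_i$ for every $i \ge 0$. If the restriction of $\psi$ to the top exterior power $\Lambda^s U$ is nonzero, then $\psi$ is injective. -/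
section Aux
open scoped DirectSum
open ExteriorAlgebra
variable {k : Type*} [Field k] {U : Type*} [AddCommGroup U] [Module k U]


lemma myIotaMulti_append {p q : ℕ} (v : Fin p → U) (w : Fin q → U) :
    ιMulti k (p + q) (Fin.append v w) = ιMulti k p v * ιMulti k q w := by
  have h : (fun i => ι k (Fin.append v w i)) =
      Fin.append (fun i => ι k (v i)) (fun i => ι k (w i)) := by
    funext i
    refine Fin.addCases (fun i => ?_) (fun i => ?_) i <;>
      simp [Fin.append_left, Fin.append_right]
  rw [ιMulti_apply, ιMulti_apply, ιMulti_apply, ← List.prod_append, ← List.ofFn_fin_append, h]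


lemma mySorted {s n : ℕ} (b : Module.Basis (Fin s) k U) (g : Fin n → Fin s) (hg : Function.Injective g)
    (T : Finset (Fin s)) (hT : T.card = n) (hgT : ∀ j, g j ∈ T) :
    ∃ c : k, c ≠ 0 ∧ ιMulti k n (fun j => b (g j)) =
      c • ιMulti k n (fun j => b (T.orderEmbOfFin hT j)) := by
  classical
  set e := T.orderIsoOfFin hT with he
  have hτinj : Function.Injective (fun j => e.symm ⟨g j, hgT j⟩) := by
    intro a a' h
    have h2 : (⟨g a, hgT a⟩ : T) = ⟨g a', hgT a'⟩ := e.symm.injective h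
    exact hg (congrArg Subtype.val h2)
  let σ : Equiv.Perm (Fin n) :=
    Equiv.ofBijective _ (Finite.injective_iff_bijective.mp hτinj)
  have hcomp : (fun j => b (T.orderEmbOfFin hT j)) ∘ σ = fun j => b (g j) := by
    funext j
    show b (T.orderEmbOfFin hT (e.symm ⟨g j, hgT j⟩)) = b (g j)
    congr 1
    rw [← Finset.coe_orderIsoOfFin_apply, ← he, e.apply_symm_apply]
  have hperm := AlternatingMap.map_perm (ιMulti k n)
    (fun j => b (T.orderEmbOfFin hT j)) σ
  rw [hcomp] at hperm
  refine ⟨((Equiv.Perm.sign σ : ℤ) : k), ?_, ?_⟩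
  · rcases Int.units_eq_one_or (Equiv.Perm.sign σ) with h | h <;> simp [h]
  · rw [hperm, Units.smul_def, Int.cast_smul_eq_zsmul]


noncomputable def eMon {s i : ℕ} (b : Module.Basis (Fin s) k U)
    (T : {T : Finset (Fin s) // T.card = i}) : ExteriorAlgebra k U :=
  ιMulti k i (fun j => b (T.1.orderEmbOfFin T.2 j))

lemma eMon_mem {s i : ℕ} (b : Module.Basis (Fin s) k U) (T : {T : Finset (Fin s) // T.card = i}) :
    eMon b T ∈ ⋀[k]^i U :=
  ιMulti_range k i (Set.mem_range_self _)

lemma mySpan {s i : ℕ} (b : Module.Basis (Fin s) k U) {x : ExteriorAlgebra k U} (hx : x ∈ ⋀[k]^i U) :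
    x ∈ Submodule.span k (Set.range (eMon (k := k) (U := U) (s := s) (i := i) b)) := by
  classical
  rw [← ιMulti_span_fixedDegree] at hx
  refine Submodule.span_le.mpr ?_ hx
  rintro _ ⟨v, rfl⟩
  have h1 : ιMulti k i v = ιMulti k i (fun j => ∑ l : Fin s, b.repr (v j) l • b l) := by
    congr 1; funext j; rw [b.sum_repr]
  have h2 := (ιMulti k i (M := U)).toMultilinearMap.map_sum
    (g := fun j l => b.repr (v j) l • b l)
  have h3 : ∀ r : Fin i → Fin s,
      (ιMulti k i (M := U)).toMultilinearMap (fun j => b.repr (v j) (r j) • b (r j)) =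
      (∏ j, b.repr (v j) (r j)) • ιMulti k i (fun j => b (r j)) :=
    fun r => MultilinearMap.map_smul_univ _ _ _
  rw [SetLike.mem_coe, h1, show ιMulti k i (fun j => ∑ l : Fin s, b.repr (v j) l • b l)
    = (ιMulti k i (M := U)).toMultilinearMap (fun j => ∑ l : Fin s, b.repr (v j) l • b l) from rfl,
    h2]
  refine Submodule.sum_mem _ fun r _ => ?_
  rw [h3]
  refine Submodule.smul_mem _ _ ?_
  by_cases hr : Function.Injective r
  · have hT : (Finset.image r Finset.univ).card = i := by
      rw [Finset.card_image_of_injective _ hr, Finset.card_univ, Fintype.card_fin]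
    obtain ⟨c, hc0, hc⟩ := mySorted b r hr _ hT
      (fun j => Finset.mem_image_of_mem _ (Finset.mem_univ j))
    rw [hc]
    exact Submodule.smul_mem _ _ (Submodule.subset_span ⟨⟨_, hT⟩, rfl⟩)
  · have : ¬ Function.Injective fun j => b (r j) := by
      intro h
      exact hr fun a a' hh => h (by simp [hh])
    rw [AlternatingMap.map_eq_zero_of_not_injective _ _ this]
    exact Submodule.zero_mem _

lemma myAppendInj {p q n : ℕ} (u : Fin p → Fin n) (v : Fin q → Fin n)
    (hu : Function.Injective u) (hv : Function.Injective v)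
    (hdisj : ∀ a b, u a ≠ v b) : Function.Injective (Fin.append u v) := by
  have key : ∀ a : Fin (p + q), (∃ x, a = Fin.castAdd q x) ∨ (∃ x, a = Fin.natAdd p x) := fun a =>
    Fin.addCases (fun x => Or.inl ⟨x, rfl⟩) (fun x => Or.inr ⟨x, rfl⟩) a
  intro a a' h
  rcases key a with ⟨x, rfl⟩ | ⟨x, rfl⟩ <;> rcases key a' with ⟨x', rfl⟩ | ⟨x', rfl⟩ <;>
    simp only [Fin.append_left, Fin.append_right] at h
  · exact congrArg _ (hu h)
  · exact absurd h (hdisj _ _)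
  · exact absurd h.symm (hdisj _ _)
  · exact congrArg _ (hv h)

lemma myCompAppend {β γ : Type*} {p q : ℕ} (f : β → γ) (u : Fin p → β) (v : Fin q → β) :
    (fun l => f (Fin.append u v l)) = Fin.append (fun l => f (u l)) (fun l => f (v l)) := by
  funext l
  refine Fin.addCases (fun l => ?_) (fun l => ?_) l <;>
    simp [Fin.append_left, Fin.append_right]

lemma eMon_mul_eMon_compl_eq_zero {i j : ℕ} (b : Module.Basis (Fin (i + j)) k U)
    (S T : {T : Finset (Fin (i + j)) // T.card = i}) (hTS : T ≠ S)
    (hSc : (S.1ᶜ : Finset (Fin (i + j))).card = j) :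
    eMon b T * eMon (i := j) b ⟨S.1ᶜ, hSc⟩ = 0 := by
  classical
  rw [eMon, eMon, ← myIotaMulti_append, ← myCompAppend]
  have hsub : ¬ T.1 ⊆ S.1 := fun hsub => hTS (Subtype.ext
    (Finset.eq_of_subset_of_card_le hsub (by rw [T.2, S.2])))
  obtain ⟨a, haT, haS⟩ := Finset.not_subset.mp hsub
  have haSc : a ∈ S.1ᶜ := Finset.mem_compl.mpr haS
  obtain ⟨p, hp⟩ : ∃ p, T.1.orderEmbOfFin T.2 p = a := by
    have := Finset.range_orderEmbOfFin T.1 T.2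
    exact Set.mem_range.mp (this ▸ (Finset.mem_coe.mpr haT))
  obtain ⟨q, hq⟩ : ∃ q, (S.1ᶜ).orderEmbOfFin hSc q = a := by
    have := Finset.range_orderEmbOfFin (S.1ᶜ) hSc
    exact Set.mem_range.mp (this ▸ (Finset.mem_coe.mpr haSc))
  apply AlternatingMap.map_eq_zero_of_eq _ _ (i := Fin.castAdd j p) (j := Fin.natAdd i q)
  · rw [Fin.append_left, Fin.append_right, hp, hq]
  · intro h
    have := congrArg Fin.val h
    simp only [Fin.coe_castAdd, Fin.coe_natAdd] at this
    omega

lemma myPairing {i j : ℕ} (b : Module.Basis (Fin (i + j)) k U) {x : ExteriorAlgebra k U}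
    (hx : x ∈ ⋀[k]^i U) (hx0 : x ≠ 0)
    (huniv : (Finset.univ : Finset (Fin (i + j))).card = i + j) :
    ∃ y ∈ ⋀[k]^j U, ∃ c : k, c ≠ 0 ∧ x * y = c • eMon b ⟨Finset.univ, huniv⟩ := by
  classical
  obtain ⟨c, hc⟩ := (Submodule.mem_span_range_iff_exists_fun k).mp (mySpan b hx)
  have hex : ∃ S, c S ≠ 0 := by
    by_contra h
    push_neg at h
    exact hx0 (by rw [← hc]; exact Finset.sum_eq_zero fun T _ => by rw [h T, zero_smul])
  obtain ⟨S, hcS⟩ := hex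
  have hSc : (S.1ᶜ : Finset (Fin (i + j))).card = j := by
    rw [Finset.card_compl, S.2, Fintype.card_fin]; omega
  set g : Fin (i + j) → Fin (i + j) :=
    Fin.append (⇑(S.1.orderEmbOfFin S.2)) (⇑((S.1ᶜ).orderEmbOfFin hSc)) with hgdef
  have hg : Function.Injective g := by
    refine myAppendInj _ _ ((S.1.orderEmbOfFin S.2).injective)
      (((S.1ᶜ).orderEmbOfFin hSc).injective) (fun a c h => ?_)
    exact (Finset.mem_compl.mp (Finset.orderEmbOfFin_mem (S.1ᶜ) hSc c))
      (h ▸ Finset.orderEmbOfFin_mem S.1 S.2 a)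
  obtain ⟨c', hc'0, hc'⟩ := mySorted b g hg Finset.univ huniv (fun l => Finset.mem_univ _)
  have hmul : eMon b S * eMon (i := j) b ⟨S.1ᶜ, hSc⟩ = c' • eMon b ⟨Finset.univ, huniv⟩ := by
    rw [eMon, eMon, ← myIotaMulti_append, ← myCompAppend, ← hgdef]
    exact hc'
  refine ⟨eMon (i := j) b ⟨S.1ᶜ, hSc⟩, eMon_mem b _, c S * c', mul_ne_zero hcS hc'0, ?_⟩
  rw [← hc, Finset.sum_mul]
  rw [Finset.sum_eq_single_of_mem S (Finset.mem_univ S)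
    (fun T _ hTS => by rw [smul_mul_assoc, eMon_mul_eMon_compl_eq_zero b S T hTS hSc, smul_zero])]
  rw [smul_mul_assoc, hmul, smul_smul]

end Aux

/-- Let `U` be an `s`-dimensional vector space over a field `k`, let
`A` be an ℕ-graded associative `k`-algebra, and let `ψ : Λ U → A` be a `k`-algebra
homomorphism sending `Λ^i U` into the degree-`i` component for every `i`. If `ψ` is
nonzero on the top exterior power `Λ^s U`, then `ψ` is injective. -/
theorem exteriorAlgebra_algHom_injective_of_top_ne_zero
    {k : Type*} [Field k] {U : Type*} [AddCommGroup U] [Module k U]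
    [FiniteDimensional k U] {s : ℕ} (hU : Module.finrank k U = s)
    {A : Type*} [Ring A] [Algebra k A]
    (𝒜 : ℕ → Submodule k A) [GradedAlgebra 𝒜]
    (ψ : ExteriorAlgebra k U →ₐ[k] A)
    (hgr : ∀ i : ℕ, ∀ x ∈
      (LinearMap.range (ExteriorAlgebra.ι k : U →ₗ[k] ExteriorAlgebra k U)) ^ i,
      ψ x ∈ 𝒜 i)
    (htop : ∃ x ∈
      (LinearMap.range (ExteriorAlgebra.ι k : U →ₗ[k] ExteriorAlgebra k U)) ^ s,
      ψ x ≠ 0) :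
    Function.Injective ψ := by
  classical
  set ℰ : ℕ → Submodule k (ExteriorAlgebra k U) := fun n => ⋀[k]^n U with hℰ
  rw [injective_iff_map_eq_zero]
  intro z hz0
  by_contra hz
  -- components of z under the exterior grading
  set D : DirectSum ℕ (fun n => ℰ n) := DirectSum.decompose ℰ z with hD
  -- ψ kills each component
  have hcomp : ∀ n : ℕ, ψ (D n : ExteriorAlgebra k U) = 0 := by
    intro n
    by_cases hn : n ∈ D.support
    · have hsum : ∑ m ∈ D.support, ψ (D m : ExteriorAlgebra k U) = 0 := by
        rw [← map_sum, hD, DirectSum.sum_support_decompose ℰ z, hz0]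
      have h0 := congrArg (fun a => (DirectSum.decompose 𝒜 a n : A)) hsum
      simp only [DirectSum.decompose_zero, DirectSum.zero_apply,
        ZeroMemClass.coe_zero] at h0
      rw [DirectSum.decompose_sum, DFinsupp.finset_sum_apply,
        AddSubmonoidClass.coe_finset_sum,
        Finset.sum_eq_single_of_mem n hn (fun m _ hm =>
          by rw [DirectSum.decompose_of_mem_ne 𝒜 (hgr m _ (D m).2) hm]),
        DirectSum.decompose_of_mem_same 𝒜 (hgr n _ (D n).2)] at h0
      exact h0
    · rw [DFinsupp.notMem_support_iff.mp hn, ZeroMemClass.coe_zero, map_zero]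
  -- pick a nonzero component
  have hDne : ∃ n, (D n : ExteriorAlgebra k U) ≠ 0 := by
    by_contra h
    push_neg at h
    apply hz
    rw [← DirectSum.sum_support_decompose ℰ z, ← hD]
    exact Finset.sum_eq_zero fun m _ => h m
  obtain ⟨i, hi0⟩ := hDne
  -- basis of U
  let b : Module.Basis (Fin s) k U := (Module.finBasis k U).reindex (finCongr (by rw [hU]))
  have hxi : (D i : ExteriorAlgebra k U) ∈ ⋀[k]^i U := (D i).2
  -- i ≤ s
  have his : i ≤ s := by
    obtain ⟨c, hc⟩ := (Submodule.mem_span_range_iff_exists_fun k).mp (mySpan b hxi)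
    by_contra h
    push_neg at h
    apply hi0
    rw [← hc]
    refine Finset.sum_eq_zero fun T _ => absurd ?_ (by omega : ¬ (i ≤ s))
    calc i = T.1.card := T.2.symm
    _ ≤ s := le_trans (Finset.card_le_card (Finset.subset_univ _)) (by simp)
  obtain ⟨j, hij⟩ : ∃ j, i + j = s := ⟨s - i, by omega⟩
  let b' : Module.Basis (Fin (i + j)) k U := b.reindex (finCongr hij.symm)
  have huniv : (Finset.univ : Finset (Fin (i + j))).card = i + j := by simp
  obtain ⟨y, hy, c, hc0, hmul⟩ := myPairing b' hxi hi0 huniv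
  -- the top monomial maps to something nonzero
  obtain ⟨x₀, hx₀mem, hx₀⟩ := htop
  have hx₀mem' : x₀ ∈ ⋀[k]^(i+j) U := by rw [hij]; exact hx₀mem
  have hEne : ψ (eMon b' ⟨Finset.univ, huniv⟩) ≠ 0 := by
    obtain ⟨c₀, hc₀⟩ := (Submodule.mem_span_range_iff_exists_fun k).mp (mySpan b' hx₀mem')
    have hu : ∀ T : {T : Finset (Fin (i + j)) // T.card = i + j}, T = ⟨Finset.univ, huniv⟩ :=
      fun T => Subtype.ext (Finset.eq_univ_of_card _ (by rw [T.2, Fintype.card_fin]))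
    have hx₀eq : x₀ = c₀ ⟨Finset.univ, huniv⟩ • eMon b' ⟨Finset.univ, huniv⟩ := by
      rw [← hc₀]
      exact Fintype.sum_eq_single _ (fun T hT => absurd (hu T) hT)
    intro hE
    apply hx₀
    rw [hx₀eq, map_smul, hE, smul_zero]
  apply hEne
  have : ψ ((D i : ExteriorAlgebra k U) * y) = 0 := by
    rw [map_mul, hcomp i, zero_mul]
  rw [hmul, map_smul] at this
  exact (smul_eq_zero.mp this).resolve_left hc0
end

section
/- Let $V$ be a finite-dimensional complex vector space, let $\beta : V \to \mathbb{C}$ be a nonzero linear form, and let $\sigma \in GL(V)$ be a linear automorphism that fixes the hyperplane $\ker \beta$ pointwise. If a polynomial function $f$ on $V$ satisfies $f \circ \sigma = -f$, then $\beta$ divides $f$ in the ring of polynomial functions on $V$. -/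
theorem aux_X_dvd {σ : Type*} {i : σ} {P : MvPolynomial σ ℂ}
    (h : ∀ x : σ → ℂ, x i = 0 → MvPolynomial.eval x P = 0) :
    MvPolynomial.X i ∣ P := by
  classical
  rw [MvPolynomial.X_dvd_iff_modMonomial_eq_zero]
  set R := P.modMonomial (Finsupp.single i 1) with hR
  apply MvPolynomial.funext (q := 0)
  intro x
  have hsupp : ∀ s ∈ R.support, s i = 0 := by
    intro s hs
    by_contra hsi
    have hle : Finsupp.single i 1 ≤ s := by
      rw [Finsupp.single_le_iff]; omega
    exact (MvPolynomial.mem_support_iff.mp hs)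
      (MvPolynomial.coeff_modMonomial_of_le P hle)
  have key : MvPolynomial.eval x R = MvPolynomial.eval (Function.update x i 0) R := by
    rw [MvPolynomial.eval_eq, MvPolynomial.eval_eq]
    refine Finset.sum_congr rfl fun s hs => ?_
    congr 1
    refine Finset.prod_congr rfl fun j hj => ?_
    have : j ≠ i := by
      rintro rfl
      exact (Finsupp.mem_support_iff.mp hj) (hsupp s hs)
    rw [Function.update_of_ne this]
  have hdecomp := MvPolynomial.modMonomial_add_divMonomial_single P i
  have hy : Function.update x i 0 i = 0 := Function.update_self i 0 x
  have := h (Function.update x i 0) hy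
  rw [← hdecomp, map_add, map_mul, MvPolynomial.eval_X, hy, zero_mul, add_zero] at this
  rw [map_zero, key, this]

/-- Let `V` be a finite-dimensional complex vector space, `β` a
nonzero linear form on `V`, and `σ` a linear automorphism of `V` fixing the
hyperplane `ker β` pointwise. If a polynomial function `f` on `V` (an element of
the subalgebra of `V → ℂ` generated by the linear forms) satisfies `f ∘ σ = -f`,
then `β` divides `f` in the ring of polynomial functions on `V`. -/
theorem linearForm_dvd_of_anti_invariant
    {V : Type*} [AddCommGroup V] [Module ℂ V] [FiniteDimensional ℂ V]
    (β : Module.Dual ℂ V) (hβ : β ≠ 0)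
    (σ : V ≃ₗ[ℂ] V) (hσ : ∀ v : V, β v = 0 → σ v = v)
    (f : V → ℂ)
    (hf : f ∈ Algebra.adjoin ℂ
      (Set.range fun φ : Module.Dual ℂ V => (φ : V → ℂ)))
    (hanti : ∀ v : V, f (σ v) = - f v) :
    ∃ g ∈ Algebra.adjoin ℂ
      (Set.range fun φ : Module.Dual ℂ V => (φ : V → ℂ)),
      ∀ v : V, f v = β v * g v := by
  classical
  -- pick v₀ with β v₀ = 1
  obtain ⟨w, hw⟩ : ∃ w : V, β w ≠ 0 := by
    by_contra h
    push_neg at h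
    exact hβ (by ext v; simp [h v])
  set v₀ : V := (β w)⁻¹ • w with hv₀def
  have hv₀ : β v₀ = 1 := by
    simp [hv₀def, inv_mul_cancel₀ hw]
  -- hyperplane
  set K := LinearMap.ker β with hK
  have hKmem : ∀ v : V, v - β v • v₀ ∈ K := by
    intro v
    simp [hK, LinearMap.mem_ker, map_sub, map_smul, hv₀, smul_eq_mul]
  -- projection onto K
  let π : V →ₗ[ℂ] K :=
    (LinearMap.id - β.smulRight v₀).codRestrict K (by
      intro v
      simpa using hKmem v)
  have hπ : ∀ v : V, (π v : V) = v - β v • v₀ := fun v => rfl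
  -- basis of K
  let c : Module.Basis (Fin (Module.finrank ℂ K)) ℂ K := Module.finBasis ℂ K
  -- generators
  let G : Option (Fin (Module.finrank ℂ K)) → (V → ℂ) := fun i =>
    Option.elim i (β : V → ℂ) (fun j => ((c.coord j).comp π : V → ℂ))
  have hGrange : Set.range G ⊆
      Set.range fun φ : Module.Dual ℂ V => (φ : V → ℂ) := by
    rintro _ ⟨i, rfl⟩
    cases i with
    | none => exact ⟨β, rfl⟩
    | some j => exact ⟨(c.coord j).comp π, rfl⟩
  -- each linear form lies in the adjoin of the generators
  have hforms : ∀ φ : Module.Dual ℂ V,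
      (φ : V → ℂ) ∈ Algebra.adjoin ℂ (Set.range G) := by
    intro φ
    have hrepr : (φ : V → ℂ) =
        φ v₀ • G none + ∑ j, φ (c j) • G (some j) := by
      funext v
      have hv : v = β v • v₀ + ((π v : V)) := by
        rw [hπ]; abel
      have hπsum : (π v : V) = ∑ j, c.repr (π v) j • (c j : V) := by
        conv_lhs => rw [← c.sum_repr (π v)]
        push_cast
        rfl
      calc φ v = φ (β v • v₀ + (π v : V)) := by rw [← hv]
        _ = β v * φ v₀ + φ (π v : V) := by
            rw [map_add, map_smul, smul_eq_mul]
        _ = β v * φ v₀ + ∑ j, c.repr (π v) j * φ (c j) := by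
            rw [hπsum, map_sum]
            simp [map_smul, smul_eq_mul]
        _ = (φ v₀ • G none + ∑ j, φ (c j) • G (some j)) v := by
            simp only [Pi.add_apply, Pi.smul_apply, Finset.sum_apply,
              smul_eq_mul, G, Option.elim]
            rw [mul_comm]
            congr 1
            refine Finset.sum_congr rfl fun j _ => ?_
            rw [mul_comm]
            rfl
    rw [hrepr]
    refine Subalgebra.add_mem _ (Subalgebra.smul_mem _ (Algebra.subset_adjoin (Set.mem_range_self none)) _) ?_
    exact Subalgebra.sum_mem _ fun j _ =>
      Subalgebra.smul_mem _ (Algebra.subset_adjoin (Set.mem_range_self (some j))) _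
  have hadj : Algebra.adjoin ℂ (Set.range fun φ : Module.Dual ℂ V => (φ : V → ℂ))
      = Algebra.adjoin ℂ (Set.range G) := by
    apply le_antisymm
    · apply Algebra.adjoin_le
      rintro _ ⟨φ, rfl⟩
      exact hforms φ
    · exact Algebra.adjoin_mono hGrange
  -- get a polynomial representing f
  rw [hadj, Algebra.adjoin_range_eq_range_aeval] at hf
  obtain ⟨P, hP0⟩ := hf
  have hP : (MvPolynomial.aeval G) P = f := hP0
  -- f vanishes on the hyperplane
  have hvanish : ∀ v : V, β v = 0 → f v = 0 := by
    intro v hv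
    have := hanti v
    rw [hσ v hv] at this
    linear_combination this / 2
  -- evaluation of the polynomial
  have heval : ∀ (Q : MvPolynomial (Option (Fin (Module.finrank ℂ K))) ℂ) (v : V),
      (MvPolynomial.aeval G Q) v = MvPolynomial.eval (fun i => G i v) Q := by
    intro Q v
    have : (Pi.evalAlgHom ℂ (fun _ : V => ℂ) v).comp (MvPolynomial.aeval G)
        = MvPolynomial.aeval (fun i => G i v) := by
      apply MvPolynomial.algHom_ext
      intro i
      simp
    calc (MvPolynomial.aeval G Q) v
        = ((Pi.evalAlgHom ℂ (fun _ : V => ℂ) v).comp (MvPolynomial.aeval G)) Q := rfl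
      _ = MvPolynomial.aeval (fun i => G i v) Q := by rw [this]
      _ = MvPolynomial.eval (fun i => G i v) Q := by
          rw [MvPolynomial.aeval_def, MvPolynomial.eval]
          simp [MvPolynomial.eval₂Hom]
  -- key: every point of ℂ^{1+m} is realized
  have key : ∀ x : Option (Fin (Module.finrank ℂ K)) → ℂ,
      MvPolynomial.eval x P = f (x none • v₀ + ∑ j, x (some j) • (c j : V)) := by
    intro x
    set v : V := x none • v₀ + ∑ j, x (some j) • (c j : V) with hv
    have hβc : ∀ j, β (c j : V) = 0 := fun j => (c j).2
    have hβv : β v = x none := by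
      simp [hv, map_add, map_smul, map_sum, hv₀, hβc, smul_eq_mul]
    have hπv : π v = ∑ j, x (some j) • c j := by
      apply Subtype.ext
      rw [hπ, hβv, hv]
      push_cast
      abel
    have hGv : (fun i => G i v) = x := by
      funext i
      cases i with
      | none => exact hβv
      | some j =>
          show c.coord j (π v) = x (some j)
          rw [hπv, Module.Basis.coord_apply, Module.Basis.repr_sum_self]
    rw [← hGv, ← heval P v, hP]
  -- deduce divisibility
  have hdvd : MvPolynomial.X none ∣ P := by
    apply aux_X_dvd
    intro x hx
    rw [key x]
    apply hvanish
    have hβc : ∀ j, β (c j : V) = 0 := fun j => (c j).2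
    simp [map_add, map_smul, map_sum, hv₀, hβc, smul_eq_mul, hx]
  obtain ⟨Q, hQ⟩ := hdvd
  refine ⟨MvPolynomial.aeval G Q, ?_, ?_⟩
  · rw [hadj, Algebra.adjoin_range_eq_range_aeval]
    exact ⟨Q, rfl⟩
  · intro v
    have : f v = (MvPolynomial.aeval G P) v := by rw [hP]
    rw [this, hQ, map_mul]
    simp only [Pi.mul_apply, MvPolynomial.aeval_X]
    rfl
end

section
/- Let $V$ be a finite-dimensional complex vector space and let $\beta_1, \dots, \beta_k : V \to \mathbb{C}$ be nonzero linear forms that are pairwise non-proportional (no $\beta_i$ is a scalar multiple of $\beta_j$ for $i \ne j$). For each $j$, let $\sigma_j \in GL(V)$ be a linear automorphism fixing the hyperplane $\ker \beta_j$ pointwise. If a polynomial function $f$ on $V$ satisfies $f \circ \sigma_j = -f$ for every $j = 1, \dots, k$, then the product $\beta_1 \beta_2 \cdots \beta_k$ divides $f$ in the ring of polynomial functions on $V$. -/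
open MvPolynomial

set_option linter.unusedSectionVars false
noncomputable section AuxPoly

variable {V : Type*} [AddCommGroup V] [Module ℂ V] [FiniteDimensional ℂ V]

/-- Evaluation formula for the basis-induced algebra hom. -/
lemma aux_eval {ι : Type*} (b : Module.Basis ι ℂ V) (F : MvPolynomial ι ℂ) (v : V) :
    (MvPolynomial.aeval (fun i => ⇑(b.coord i)) F : V → ℂ) v
      = MvPolynomial.eval (fun i => b.coord i v) F := by
  have h : (Pi.evalAlgHom ℂ (fun _ : V => ℂ) v).comp
        (MvPolynomial.aeval (fun i => ⇑(b.coord i)))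
      = MvPolynomial.aeval (fun i => b.coord i v) := by
    apply MvPolynomial.algHom_ext
    intro i
    simp
  have h2 := congrArg (fun Φ => Φ F) h
  simp only [AlgHom.comp_apply, Pi.evalAlgHom_apply] at h2
  rw [h2, ← MvPolynomial.coe_aeval_eq_eval]
  rfl

lemma aux_inj {ι : Type*} [Fintype ι] (b : Module.Basis ι ℂ V) :
    Function.Injective (MvPolynomial.aeval (fun i => ⇑(b.coord i)) :
      MvPolynomial ι ℂ →ₐ[ℂ] (V → ℂ)) := by
  rw [injective_iff_map_eq_zero]
  intro F hF
  refine MvPolynomial.funext (q := 0) fun x => ?_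
  rw [map_zero]
  set v : V := b.repr.symm (Finsupp.equivFunOnFinite.symm x) with hv
  have hco : ∀ i, b.coord i v = x i := by
    intro i
    simp [hv, Module.Basis.coord_apply]
  have hx : (fun i => (b.coord i) v) = x := funext hco
  have := congrFun hF v
  rw [aux_eval b F v, hx] at this
  simpa using this

lemma aux_range {ι : Type*} [Fintype ι] (b : Module.Basis ι ℂ V) :
    (MvPolynomial.aeval (fun i => ⇑(b.coord i)) :
      MvPolynomial ι ℂ →ₐ[ℂ] (V → ℂ)).range
      = Algebra.adjoin ℂ (Set.range fun φ : Module.Dual ℂ V => (φ : V → ℂ)) := by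
  rw [← Algebra.adjoin_range_eq_range_aeval]
  apply le_antisymm
  · apply Algebra.adjoin_mono
    rintro x ⟨i, rfl⟩
    exact Set.mem_range.mpr ⟨b.coord i, rfl⟩
  · rw [Algebra.adjoin_le_iff]
    rintro _ ⟨φ, rfl⟩
    show ⇑φ ∈ _
    have hφ : ⇑φ = ∑ i, φ (b i) • ⇑(b.coord i) := by
      funext v
      rw [Finset.sum_apply]
      simp only [Pi.smul_apply, smul_eq_mul, Module.Basis.coord_apply]
      conv_lhs => rw [← b.sum_repr v]
      rw [map_sum]
      simp [mul_comm]
    rw [hφ]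
    exact Subalgebra.sum_mem _ fun i _ =>
      Subalgebra.smul_mem _ (Algebra.subset_adjoin (Set.mem_range_self i)) _

lemma sub_aeval_update_dvd {ι : Type*} [DecidableEq ι] (i₀ : ι) (F : MvPolynomial ι ℂ) :
    X i₀ ∣ F - MvPolynomial.aeval (Function.update X i₀ 0) F := by
  set g : ι → MvPolynomial ι ℂ := Function.update X i₀ 0 with hg
  induction F using MvPolynomial.induction_on with
  | C a => simp
  | add p q hp hq =>
    rw [map_add]
    have := dvd_add hp hq
    convert this using 1
    ring
  | mul_X p i hp =>
    rw [map_mul, aeval_X]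
    by_cases hi : i = i₀
    · subst hi
      rw [hg]
      simp only [Function.update_self, mul_zero, sub_zero]
      exact Dvd.intro_left p rfl
    · have hgi : g i = X i := by rw [hg]; simp [Function.update_of_ne hi]
      rw [hgi]
      have := hp.mul_right (X i)
      rwa [sub_mul] at this

/-- A polynomial vanishing on the hyperplane `x i₀ = 0` is divisible by `X i₀`. -/
lemma X_dvd_of_vanishing {ι : Type*} [DecidableEq ι] (i₀ : ι) (F : MvPolynomial ι ℂ)
    (h : ∀ x : ι → ℂ, x i₀ = 0 → MvPolynomial.eval x F = 0) : X i₀ ∣ F := by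
  set g : ι → MvPolynomial ι ℂ := Function.update X i₀ 0 with hg
  have hdvd : X i₀ ∣ F - MvPolynomial.aeval g F := sub_aeval_update_dvd i₀ F
  have h0 : MvPolynomial.aeval g F = 0 := by
    refine MvPolynomial.funext (q := 0) fun x => ?_
    rw [map_zero]
    have h1 : MvPolynomial.eval x (MvPolynomial.aeval g F)
        = MvPolynomial.eval (fun i => MvPolynomial.eval x (g i)) F := by
      have hb : MvPolynomial.aeval g F = MvPolynomial.bind₁ g F := rfl
      rw [hb]
      have := MvPolynomial.aeval_bind₁ (f := x) (g := g) (φ := F)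
      rw [← MvPolynomial.coe_aeval_eq_eval]
      simpa using this
    rw [h1]
    have h2 : (fun i => MvPolynomial.eval x (g i)) = Function.update x i₀ 0 := by
      funext i
      by_cases hi : i = i₀
      · subst hi; simp [hg]
      · simp [hg, Function.update_of_ne hi]
    rw [h2]
    exact h _ (Function.update_self _ _ _)
  rw [h0, sub_zero] at hdvd
  exact hdvd

/-- `X 0` is prime in `MvPolynomial (Fin (m+1)) ℂ`. -/
lemma prime_X_zero (m : ℕ) : Prime (X 0 : MvPolynomial (Fin (m + 1)) ℂ) := by
  have h := (MulEquiv.prime_iff (MvPolynomial.finSuccEquiv ℂ m).toRingEquiv.toMulEquiv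
    (p := (X 0 : MvPolynomial (Fin (m + 1)) ℂ))).symm
  rw [h]
  have : (MvPolynomial.finSuccEquiv ℂ m).toRingEquiv.toMulEquiv (X 0)
      = (Polynomial.X : Polynomial (MvPolynomial (Fin m) ℂ)) := by
    simpa using MvPolynomial.finSuccEquiv_X_zero (R := ℂ) (n := m)
  rw [this]
  exact Polynomial.prime_X

/-- Transfer of primality along a ring equivalence. -/
lemma prime_map_equiv {R S : Type*} [CommRing R] [CommRing S] (e : R ≃+* S) {a : R}
    (ha : Prime a) : Prime (e a) := by
  have := (MulEquiv.prime_iff e.toMulEquiv (p := a)).symm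
  rw [this] at ha
  simpa using ha

/-- adapted basis: a basis whose 0-th coordinate functional is `β`. -/
lemma exists_adapted (β : Module.Dual ℂ V) (hb : β ≠ 0) :
    ∃ (m : ℕ) (b : Module.Basis (Fin (m + 1)) ℂ V), ⇑(b.coord 0) = ⇑β := by
  obtain ⟨v, hv⟩ : ∃ v, β v ≠ 0 := by
    by_contra h
    push_neg at h
    exact hb (LinearMap.ext fun v => by simp [h v])
  set v₀ : V := (β v)⁻¹ • v with hv₀def
  have hv₀ : β v₀ = 1 := by
    rw [hv₀def, map_smul, smul_eq_mul, inv_mul_cancel₀ hv]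
  set m := Module.finrank ℂ (LinearMap.ker β) with hm
  let bK : Module.Basis (Fin m) ℂ (LinearMap.ker β) := Module.finBasis ℂ _
  have hli : ∀ (c : ℂ), ∀ x ∈ LinearMap.ker β, c • v₀ + x = 0 → c = 0 := by
    intro c x hx hcx
    have := congrArg β hcx
    rw [map_add, map_smul, hv₀, LinearMap.mem_ker.mp hx] at this
    simpa using this
  have hsp : ∀ z : V, ∃ c : ℂ, z + c • v₀ ∈ LinearMap.ker β := by
    intro z
    exact ⟨-β z, by simp [LinearMap.mem_ker, hv₀]⟩
  let b : Module.Basis (Fin (m + 1)) ℂ V := Module.Basis.mkFinCons v₀ bK hli hsp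
  have hbcoe : (b : Fin (m + 1) → V) = Fin.cons v₀ ((↑) ∘ bK) :=
    Module.Basis.coe_mkFinCons v₀ bK hli hsp
  refine ⟨m, b, ?_⟩
  have hco : (b.coord 0 : V →ₗ[ℂ] ℂ) = β := by
    apply b.ext
    intro i
    refine Fin.cases ?_ ?_ i
    · have hb0 : b 0 = v₀ := by rw [congrFun hbcoe 0]; simp
      have h1 : b.coord 0 (b 0) = 1 := by simp [Module.Basis.coord_apply]
      rw [h1, hb0, hv₀]
    · intro j
      have hbj : b j.succ = (bK j : V) := by rw [congrFun hbcoe j.succ]; simp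
      have h1 : b.coord 0 (b j.succ) = 0 := by
        simp [Module.Basis.coord_apply, Finsupp.single_apply, Fin.succ_ne_zero]
      rw [h1, hbj]
      exact (LinearMap.mem_ker.mp (bK j).2).symm
  exact congrArg _ hco

/-- if `γ` vanishes on `ker β` then it's a multiple of `β`. -/
lemma dual_smul_of_vanishing (β γ : Module.Dual ℂ V) (hβ : β ≠ 0)
    (h : ∀ v, β v = 0 → γ v = 0) : ∃ c : ℂ, γ = c • β := by
  obtain ⟨v, hv⟩ : ∃ v, β v ≠ 0 := by
    by_contra hc
    push_neg at hc
    exact hβ (LinearMap.ext fun v => by simp [hc v])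
  set v₀ : V := (β v)⁻¹ • v with hv₀def
  have hv₀ : β v₀ = 1 := by
    rw [hv₀def, map_smul, smul_eq_mul, inv_mul_cancel₀ hv]
  refine ⟨γ v₀, ?_⟩
  ext w
  have hw : β (w - β w • v₀) = 0 := by
    rw [map_sub, map_smul, hv₀, smul_eq_mul, mul_one, sub_self]
  have := h _ hw
  rw [map_sub, map_smul, smul_eq_mul, sub_eq_zero] at this
  rw [this]
  simp [mul_comm]

/-- pairwise non-dividing primes each dividing F: product divides. -/
lemma prod_primes_dvd' {R : Type*} [CommRing R] {ι : Type*} [DecidableEq ι]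
    (s : Finset ι) (P : ι → R)
    (hP : ∀ i ∈ s, Prime (P i))
    (hnd : ∀ i ∈ s, ∀ j ∈ s, i ≠ j → ¬ P i ∣ P j) :
    ∀ F, (∀ j ∈ s, P j ∣ F) → (∏ j ∈ s, P j) ∣ F := by
  induction s using Finset.induction_on with
  | empty => intro F _; simp
  | @insert a s ha ih =>
    intro F hF
    obtain ⟨G, hG⟩ := hF a (Finset.mem_insert_self a s)
    rw [Finset.prod_insert ha, hG]
    apply mul_dvd_mul_left
    refine ih (fun i hi => hP i (Finset.mem_insert_of_mem hi))
      (fun i hi j hj hij => hnd i (Finset.mem_insert_of_mem hi) j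
        (Finset.mem_insert_of_mem hj) hij) G ?_
    intro j hj
    have hdvd : P j ∣ P a * G := by
      rw [← hG]; exact hF j (Finset.mem_insert_of_mem hj)
    rcases (hP j (Finset.mem_insert_of_mem hj)).2.2 _ _ hdvd with h1 | h2
    · exact absurd h1 (hnd j (Finset.mem_insert_of_mem hj) a
        (Finset.mem_insert_self a s) (ne_of_mem_of_not_mem hj ha))
    · exact h2

end AuxPoly

noncomputable section Main

variable {V : Type*} [AddCommGroup V] [Module ℂ V] [FiniteDimensional ℂ V]

/-- The algebra equivalence from a polynomial ring to the algebra of polynomial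
functions induced by a basis. -/
noncomputable def basisEquivAdjoin {ι : Type*} [Fintype ι] (b : Module.Basis ι ℂ V) :
    MvPolynomial ι ℂ ≃ₐ[ℂ]
      (Algebra.adjoin ℂ (Set.range fun φ : Module.Dual ℂ V => (φ : V → ℂ))) :=
  (AlgEquiv.ofInjective _ (aux_inj b)).trans (Subalgebra.equivOfEq _ _ (aux_range b))

lemma basisEquivAdjoin_val {ι : Type*} [Fintype ι] (b : Module.Basis ι ℂ V)
    (F : MvPolynomial ι ℂ) :
    ((basisEquivAdjoin b F :
        Algebra.adjoin ℂ (Set.range fun φ : Module.Dual ℂ V => (φ : V → ℂ))) : V → ℂ)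
      = MvPolynomial.aeval (fun i => ⇑(b.coord i)) F := rfl

lemma prime_beta (β : Module.Dual ℂ V) (hβ : β ≠ 0)
    (hmem : ⇑β ∈ Algebra.adjoin ℂ (Set.range fun φ : Module.Dual ℂ V => (φ : V → ℂ))) :
    Prime (⟨⇑β, hmem⟩ :
      Algebra.adjoin ℂ (Set.range fun φ : Module.Dual ℂ V => (φ : V → ℂ))) := by
  obtain ⟨m, b, hb⟩ := exists_adapted β hβ
  have hX : basisEquivAdjoin b (X 0) = ⟨⇑β, hmem⟩ := by
    apply Subtype.ext
    rw [basisEquivAdjoin_val, aeval_X]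
    exact hb
  rw [← hX]
  have := prime_map_equiv (basisEquivAdjoin b).toRingEquiv (prime_X_zero m)
  simpa using this

lemma beta_dvd (β : Module.Dual ℂ V) (hβ : β ≠ 0) (f : V → ℂ)
    (hmem : ⇑β ∈ Algebra.adjoin ℂ (Set.range fun φ : Module.Dual ℂ V => (φ : V → ℂ)))
    (hf : f ∈ Algebra.adjoin ℂ (Set.range fun φ : Module.Dual ℂ V => (φ : V → ℂ)))
    (hvan : ∀ v, β v = 0 → f v = 0) :
    (⟨⇑β, hmem⟩ :
        Algebra.adjoin ℂ (Set.range fun φ : Module.Dual ℂ V => (φ : V → ℂ)))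
      ∣ ⟨f, hf⟩ := by
  obtain ⟨m, b, hb⟩ := exists_adapted β hβ
  set E := basisEquivAdjoin b with hE
  set F := E.symm ⟨f, hf⟩ with hF
  have hEF : E F = ⟨f, hf⟩ := by rw [hF, E.apply_symm_apply]
  have hvanF : ∀ x : Fin (m + 1) → ℂ, x 0 = 0 → MvPolynomial.eval x F = 0 := by
    intro x hx
    set v : V := b.repr.symm (Finsupp.equivFunOnFinite.symm x) with hv
    have hco : ∀ i, b.coord i v = x i := by
      intro i
      simp [hv, Module.Basis.coord_apply]
    have h1 : MvPolynomial.aeval (fun i => ⇑(b.coord i)) F v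
        = MvPolynomial.eval x F := by
      rw [aux_eval b F v]
      exact congrArg (fun y => MvPolynomial.eval y F) (_root_.funext hco)
    have h2 : MvPolynomial.aeval (fun i => ⇑(b.coord i)) F v = f v := by
      rw [← basisEquivAdjoin_val b F, ← hE, hEF]
    rw [← h1, h2]
    apply hvan
    have hβv : β v = b.coord 0 v := (congrFun hb v).symm
    rw [hβv, hco 0]
    exact hx
  have hXdvd : X (0 : Fin (m + 1)) ∣ F := X_dvd_of_vanishing 0 F hvanF
  have hmap := map_dvd E hXdvd
  have hX : E (X 0) = ⟨⇑β, hmem⟩ := by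
    apply Subtype.ext
    rw [hE, basisEquivAdjoin_val, aeval_X]
    exact hb
  rwa [hX, hEF] at hmap

end Main

/-- Let `β 1, …, β k` be pairwise non-proportional nonzero linear forms
on a finite-dimensional complex vector space `V`, and for each `j` let `σ j` be a
linear automorphism of `V` fixing the hyperplane `ker (β j)` pointwise. If a
polynomial function `f` on `V` satisfies `f ∘ σ j = -f` for all `j`, then the
product `β 1 ⋯ β k` divides `f` in the ring of polynomial functions on `V`. -/
theorem prod_linearForms_dvd_of_anti_invariant
    {V : Type*} [AddCommGroup V] [Module ℂ V] [FiniteDimensional ℂ V]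
    {k : ℕ} (β : Fin k → Module.Dual ℂ V) (hβ : ∀ j, β j ≠ 0)
    (hprop : ∀ i j : Fin k, i ≠ j → ∀ c : ℂ, β i ≠ c • β j)
    (σ : Fin k → (V ≃ₗ[ℂ] V)) (hσ : ∀ j, ∀ v : V, β j v = 0 → σ j v = v)
    (f : V → ℂ)
    (hf : f ∈ Algebra.adjoin ℂ
      (Set.range fun φ : Module.Dual ℂ V => (φ : V → ℂ)))
    (hanti : ∀ j, ∀ v : V, f (σ j v) = - f v) :
    ∃ g ∈ Algebra.adjoin ℂ
      (Set.range fun φ : Module.Dual ℂ V => (φ : V → ℂ)),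
      ∀ v : V, f v = (∏ j, β j v) * g v := by
  classical
  set Adj := Algebra.adjoin ℂ
    (Set.range fun φ : Module.Dual ℂ V => (φ : V → ℂ)) with hAdj
  have hmem : ∀ j, ⇑(β j) ∈ Adj := fun j =>
    Algebra.subset_adjoin (Set.mem_range_self (β j))
  set βA : Fin k → Adj := fun j => ⟨⇑(β j), hmem j⟩ with hβA
  set fA : Adj := ⟨f, hf⟩ with hfA
  have hprime : ∀ j, Prime (βA j) := fun j => prime_beta (β j) (hβ j) (hmem j)
  have hvan : ∀ j v, β j v = 0 → f v = 0 := by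
    intro j v hv
    have h1 := hanti j v
    rw [hσ j v hv] at h1
    have h2 : (2 : ℂ) * f v = 0 := by linear_combination h1
    rcases mul_eq_zero.mp h2 with h | h
    · exact absurd h two_ne_zero
    · exact h
  have hdvdeach : ∀ j, βA j ∣ fA := fun j =>
    beta_dvd (β j) (hβ j) f (hmem j) hf (hvan j)
  have hnd : ∀ i ∈ Finset.univ, ∀ j ∈ Finset.univ, i ≠ j → ¬ βA i ∣ βA j := by
    rintro i - j - hij ⟨g, hg⟩
    have hg' := congrArg Subtype.val hg
    have hv : ∀ v, β i v = 0 → β j v = 0 := by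
      intro v hv
      have h2 := congrFun hg' v
      simp only [hβA] at h2
      rw [h2]
      show (⇑(β i) * (g : V → ℂ)) v = 0
      rw [Pi.mul_apply, hv, zero_mul]
    obtain ⟨c, hc⟩ := dual_smul_of_vanishing (β i) (β j) (hβ i) hv
    exact hprop j i hij.symm c hc
  have hproddvd := prod_primes_dvd' Finset.univ βA
    (fun i _ => hprime i) hnd fA (fun j _ => hdvdeach j)
  obtain ⟨gA, hgA⟩ := hproddvd
  refine ⟨(gA : V → ℂ), gA.2, fun v => ?_⟩
  have h1 := congrArg Subtype.val hgA
  have h2 := congrFun h1 v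
  have h3 : ((∏ j, βA j : Adj) : V → ℂ) v = ∏ j, β j v := by
    have h4 : ((∏ j, βA j : Adj) : V → ℂ) = ∏ j, ⇑(β j) := by
      have := map_prod Adj.val βA Finset.univ
      simp only [Subalgebra.coe_val] at this
      exact this
    rw [h4, Finset.prod_apply]
  calc f v = ((∏ j, βA j : Adj) * gA : Adj).val v := h2
    _ = ((∏ j, βA j : Adj) : V → ℂ) v * (gA : V → ℂ) v := rfl
    _ = (∏ j, β j v) * (gA : V → ℂ) v := by rw [h3]
end

section
/- Let $V$ be a finite-dimensional complex vector space and let $\beta_1, \dots, \beta_k : V \to \mathbb{C}$ be nonzero linear forms that are pairwise non-proportional. For each $j$, let $\sigma_j \in GL(V)$ be a linear automorphism fixing the hyperplane $\ker \beta_j$ pointwise. If a polynomial function $f$ on $V$ is homogeneous of degree $k$ and satisfies $f \circ \sigma_j = -f$ for every $j = 1, \dots, k$, then $f$ is a scalar multiple of the product $\beta_1 \beta_2 \cdots \beta_k$. -/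
open Module

/-- The algebra of polynomial functions on `V`. -/
noncomputable abbrev polyAlg (V : Type*) [AddCommGroup V] [Module ℂ V] : Subalgebra ℂ (V → ℂ) :=
  Algebra.adjoin ℂ (Set.range fun φ : Module.Dual ℂ V => (φ : V → ℂ))

/-- Evaluation at a point as a ring hom on the subalgebra of polynomial functions. -/
noncomputable def evalAt {V : Type*} [AddCommGroup V] [Module ℂ V] (w : V) :
    ↥(polyAlg V) →+* ℂ :=
  (Pi.evalRingHom (fun _ : V => ℂ) w).comp (Subalgebra.val _).toRingHom

@[simp] lemma evalAt_apply {V : Type*} [AddCommGroup V] [Module ℂ V] (w : V)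
    (x : ↥(polyAlg V)) : evalAt w x = (x : V → ℂ) w := rfl

theorem comp_mem_polyAlg {W V : Type*} [AddCommGroup W] [Module ℂ W]
    [AddCommGroup V] [Module ℂ V] (T : W →ₗ[ℂ] V) {f : V → ℂ}
    (hf : f ∈ polyAlg V) : (fun w => f (T w)) ∈ polyAlg W := by
  induction hf using Algebra.adjoin_induction with
  | mem x hx =>
    obtain ⟨φ, rfl⟩ := hx
    exact Algebra.subset_adjoin ⟨φ.comp T, rfl⟩
  | algebraMap r => exact Subalgebra.algebraMap_mem _ r
  | add x y hx hy ihx ihy => exact add_mem ihx ihy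
  | mul x y hx hy ihx ihy => exact mul_mem ihx ihy

theorem exists_mv {V : Type*} [AddCommGroup V] [Module ℂ V] [FiniteDimensional ℂ V]
    {f : V → ℂ} (hf : f ∈ polyAlg V) :
    ∃ P : MvPolynomial (Fin (Module.finrank ℂ V)) ℂ,
      ∀ v, f v = MvPolynomial.eval (fun i => (Module.finBasis ℂ V).repr v i) P := by
  induction hf using Algebra.adjoin_induction with
  | mem x hx =>
    obtain ⟨φ, rfl⟩ := hx
    refine ⟨∑ i, MvPolynomial.C (φ (Module.finBasis ℂ V i)) * MvPolynomial.X i, fun v => ?_⟩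
    conv_lhs => rw [← Basis.sum_repr (Module.finBasis ℂ V) v]
    simp [map_sum, mul_comm]
    conv_lhs => rw [← Module.Basis.sum_repr (Module.finBasis ℂ V) v]
    rw [map_sum]
    exact Finset.sum_congr rfl fun i _ => by rw [map_smul, smul_eq_mul, mul_comm]
  | algebraMap r => exact ⟨MvPolynomial.C r, fun v => by simp⟩
  | add x y hx hy ihx ihy =>
    obtain ⟨P, hP⟩ := ihx; obtain ⟨Q, hQ⟩ := ihy
    exact ⟨P + Q, fun v => by simp [← hP, ← hQ]⟩
  | mul x y hx hy ihx ihy =>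
    obtain ⟨P, hP⟩ := ihx; obtain ⟨Q, hQ⟩ := ihy
    exact ⟨P * Q, fun v => by simp [← hP, ← hQ]⟩

theorem mul_eq_zero_fn {V : Type*} [AddCommGroup V] [Module ℂ V] [FiniteDimensional ℂ V]
    {p q : V → ℂ} (hp : p ∈ polyAlg V) (hq : q ∈ polyAlg V)
    (h : ∀ v, p v * q v = 0) (hp0 : ∃ v, p v ≠ 0) : ∀ v, q v = 0 := by
  obtain ⟨P, hP⟩ := exists_mv hp
  obtain ⟨Q, hQ⟩ := exists_mv hq
  set b := Module.finBasis ℂ V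
  have key : P * Q = 0 := by
    apply MvPolynomial.funext
    intro x
    have hco : (fun i => b.repr (b.equivFun.symm x) i) = x := by
      funext i
      rw [← Basis.equivFun_apply, LinearEquiv.apply_symm_apply]
    rw [map_mul, map_zero]
    have := h (b.equivFun.symm x)
    rw [hP, hQ, hco] at this
    exact this
  rcases mul_eq_zero.mp key with h0 | h0
  · obtain ⟨v, hv⟩ := hp0
    exact absurd (by rw [hP, h0, map_zero]) hv
  · intro v; rw [hQ, h0, map_zero]

theorem exists_expansion {V : Type*} [AddCommGroup V] [Module ℂ V] (v0 : V)
    {f : V → ℂ} (hf : f ∈ polyAlg V) :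
    ∃ q : Polynomial ↥(polyAlg V), ∀ w t,
      f (w + t • v0) = Polynomial.eval t (q.map (evalAt w)) := by
  induction hf using Algebra.adjoin_induction with
  | mem x hx =>
    obtain ⟨φ, rfl⟩ := hx
    refine ⟨Polynomial.C ⟨(φ : V → ℂ), Algebra.subset_adjoin ⟨φ, rfl⟩⟩ +
      Polynomial.C ⟨(fun _ => φ v0), by
        exact Subalgebra.algebraMap_mem (polyAlg V) (φ v0)⟩ * Polynomial.X, fun w t => ?_⟩
    simp [Polynomial.eval_add, Polynomial.eval_mul]
    ring
  | algebraMap r =>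
    refine ⟨Polynomial.C ⟨algebraMap ℂ (V → ℂ) r, Subalgebra.algebraMap_mem _ r⟩, fun w t => ?_⟩
    simp
  | add x y hx hy ihx ihy =>
    obtain ⟨p, hp⟩ := ihx; obtain ⟨q, hq⟩ := ihy
    exact ⟨p + q, fun w t => by
      rw [Polynomial.map_add, Polynomial.eval_add, ← hp, ← hq]; rfl⟩
  | mul x y hx hy ihx ihy =>
    obtain ⟨p, hp⟩ := ihx; obtain ⟨q, hq⟩ := ihy
    exact ⟨p * q, fun w t => by
      rw [Polynomial.map_mul, Polynomial.eval_mul, ← hp, ← hq]; rfl⟩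

theorem dual_mem_polyAlg {V : Type*} [AddCommGroup V] [Module ℂ V] (β : Module.Dual ℂ V) :
    (β : V → ℂ) ∈ polyAlg V := Algebra.subset_adjoin ⟨β, rfl⟩

theorem exists_factor {V : Type*} [AddCommGroup V] [Module ℂ V]
    {β : Module.Dual ℂ V} (hβ : β ≠ 0) {f : V → ℂ} (hf : f ∈ polyAlg V)
    (hvan : ∀ v, β v = 0 → f v = 0) :
    ∃ g, g ∈ polyAlg V ∧ ∀ v, f v = β v * g v := by
  obtain ⟨u, hu⟩ : ∃ u, β u ≠ 0 := by
    by_contra hc; push_neg at hc; exact hβ (LinearMap.ext hc)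
  set v0 := (β u)⁻¹ • u with hv0
  have hβv0 : β v0 = 1 := by rw [hv0, map_smul, smul_eq_mul, inv_mul_cancel₀ hu]
  obtain ⟨q, hq⟩ := exists_expansion v0 hf
  set L : V →ₗ[ℂ] V := LinearMap.id - β.smulRight v0 with hL
  have hLv : ∀ v, L v = v - β v • v0 := fun v => rfl
  have hβL : ∀ v, β (L v) = 0 := by
    intro v; rw [hLv, map_sub, map_smul, hβv0, smul_eq_mul, mul_one, sub_self]
  set g : V → ℂ := fun v => Polynomial.eval (β v) ((q.divX).map (evalAt (L v))) with hgdef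
  have hgsum : g = fun v => ∑ d ∈ Finset.range (q.divX.natDegree + 1),
      ((q.divX.coeff d : V → ℂ) (L v)) * β v ^ d := by
    funext v
    show Polynomial.eval (β v) (Polynomial.map (evalAt (L v)) q.divX) = _
    rw [Polynomial.eval_eq_sum_range'
      (lt_of_le_of_lt (Polynomial.natDegree_map_le) (Nat.lt_succ_self _))]
    exact Finset.sum_congr rfl fun d _ => by rw [Polynomial.coeff_map, evalAt_apply]
  refine ⟨g, ?_, ?_⟩
  · rw [hgsum]
    have hmem : (∑ d ∈ Finset.range (q.divX.natDegree + 1),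
        (fun v => ((q.divX.coeff d : V → ℂ) (L v)) * β v ^ d)) ∈ polyAlg V := by
      apply Subalgebra.sum_mem
      intro d _
      exact mul_mem (comp_mem_polyAlg L (q.divX.coeff d).2)
        (pow_mem (dual_mem_polyAlg β) d)
    convert hmem using 1
    funext v
    rw [Finset.sum_apply]
  · intro v
    have hv : v = L v + β v • v0 := by rw [hLv]; abel
    have h1 := hq (L v) (β v)
    have h2 := hq (L v) 0
    rw [zero_smul, add_zero] at h2
    have hfLv : f (L v) = 0 := hvan _ (hβL v)
    have h0 : (evalAt (L v)) (q.coeff 0) = 0 := by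
      rw [← Polynomial.coeff_map, Polynomial.coeff_zero_eq_eval_zero, ← h2]
      exact hfLv
    calc f v = Polynomial.eval (β v) (q.map (evalAt (L v))) := by conv_lhs => rw [hv, h1]
      _ = β v * g v := by
          conv_lhs => rw [← Polynomial.X_mul_divX_add (p := q)]
          rw [Polynomial.map_add, Polynomial.map_mul, Polynomial.map_X, Polynomial.map_C,
            Polynomial.eval_add, Polynomial.eval_mul, Polynomial.eval_X, Polynomial.eval_C,
            h0, add_zero]

theorem dual_eq_smul {V : Type*} [AddCommGroup V] [Module ℂ V] {β γ : Module.Dual ℂ V}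
    (hβ : β ≠ 0) (h : ∀ u, β u = 0 → γ u = 0) : ∃ c : ℂ, γ = c • β := by
  obtain ⟨u, hu⟩ : ∃ u, β u ≠ 0 := by
    by_contra hc; push_neg at hc; exact hβ (LinearMap.ext hc)
  refine ⟨γ u / β u, ?_⟩
  ext v
  have hker : β (v - (β v / β u) • u) = 0 := by
    rw [map_sub, map_smul, smul_eq_mul]; field_simp; ring
  have h2 := h _ hker
  rw [map_sub, map_smul, smul_eq_mul, sub_eq_zero] at h2
  rw [LinearMap.smul_apply, smul_eq_mul, h2]
  field_simp

theorem aux_main {V : Type*} [AddCommGroup V] [Module ℂ V] [FiniteDimensional ℂ V] :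
    ∀ (k : ℕ) (β : Fin k → Module.Dual ℂ V), (∀ j, β j ≠ 0) →
    (∀ i j : Fin k, i ≠ j → ∀ c : ℂ, β i ≠ c • β j) →
    ∀ f : V → ℂ, f ∈ polyAlg V →
    (∀ (c : ℂ) (v : V), f (c • v) = c ^ k * f v) →
    (∀ j v, β j v = 0 → f v = 0) →
    ∃ c : ℂ, ∀ v, f v = c * ∏ j, β j v := by
  intro k
  induction k with
  | zero =>
    intro β _ _ f _ hhom _
    refine ⟨f 0, fun v => ?_⟩
    have h := hhom 0 v
    rw [zero_smul, pow_zero, one_mul] at h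
    simp [← h]
  | succ k ih =>
    intro β hβ hprop f hf hhom hvan
    obtain ⟨g, hg, hfg⟩ := exists_factor (hβ 0) hf (hvan 0)
    have hβ0fn : ∃ v, (β 0) v ≠ 0 := by
      by_contra hc; push_neg at hc; exact hβ 0 (LinearMap.ext hc)
    -- g vanishes on ker (β j.succ)
    have hgvan : ∀ (j : Fin k) (v : V), β j.succ v = 0 → g v = 0 := by
      intro j v hv
      set H := LinearMap.ker (β j.succ) with hH
      have h1 : (fun w : H => g (H.subtype w)) ∈ polyAlg H := comp_mem_polyAlg H.subtype hg
      have h2 : (fun w : H => (β 0) (H.subtype w)) ∈ polyAlg H :=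
        comp_mem_polyAlg H.subtype (dual_mem_polyAlg (β 0))
      have hprod : ∀ w : H, (β 0) (H.subtype w) * g (H.subtype w) = 0 := by
        intro w
        rw [← hfg]
        exact hvan j.succ _ w.2
      have hne : ∃ w : H, (β 0) (H.subtype w) ≠ 0 := by
        by_contra hc
        push_neg at hc
        obtain ⟨c, hcβ⟩ := dual_eq_smul (hβ j.succ) (fun u hu => hc ⟨u, hu⟩)
        exact hprop 0 j.succ (Fin.succ_ne_zero j).symm c hcβ
      exact mul_eq_zero_fn h2 h1 hprod hne ⟨v, hv⟩
    -- g is homogeneous of degree k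
    have hc' : ∀ (c : ℂ), c ≠ 0 → ∀ v : V, g (c • v) = c ^ k * g v := by
      intro c hc
      have hqmem : (fun v => g (c • v) - c ^ k * g v) ∈ polyAlg V := by
        have h1 : (fun v => g (c • v)) ∈ polyAlg V :=
          comp_mem_polyAlg (c • (LinearMap.id : V →ₗ[ℂ] V)) hg
        exact sub_mem h1 (SMulMemClass.smul_mem (c ^ k) hg)
      have hzero : ∀ v, (β 0) v * (g (c • v) - c ^ k * g v) = 0 := by
        intro v
        have e1 : c * ((β 0) v * g (c • v)) = c * (c ^ k * ((β 0) v * g v)) := by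
          have hfc := hfg (c • v)
          rw [map_smul, smul_eq_mul] at hfc
          calc c * ((β 0) v * g (c • v)) = f (c • v) := by rw [hfc]; ring
            _ = c ^ (k + 1) * f v := hhom c v
            _ = c * (c ^ k * ((β 0) v * g v)) := by rw [hfg v]; ring
        have e2 := mul_left_cancel₀ hc e1
        linear_combination e2
      intro v
      exact sub_eq_zero.mp (mul_eq_zero_fn (dual_mem_polyAlg (β 0)) hqmem hzero hβ0fn v)
    have hghom : ∀ (c : ℂ) (v : V), g (c • v) = c ^ k * g v := by
      intro c v
      rcases eq_or_ne c 0 with rfl | hc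
      · obtain ⟨q, hqe⟩ := exists_expansion v hg
        set M := q.map (evalAt 0) with hM
        have hr : M - Polynomial.C (g v) * Polynomial.X ^ k = 0 := by
          apply Polynomial.eq_zero_of_infinite_isRoot
          refine ((Set.finite_singleton (0 : ℂ)).infinite_compl).mono ?_
          intro t ht
          have htne : t ≠ 0 := ht
          have he := hqe 0 t
          rw [zero_add] at he
          simp only [Set.mem_setOf_eq, Polynomial.IsRoot, Polynomial.eval_sub,
            Polynomial.eval_mul, Polynomial.eval_pow, Polynomial.eval_C, Polynomial.eval_X]
          rw [← he, hc' t htne v]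
          ring
        have hMeq : M = Polynomial.C (g v) * Polynomial.X ^ k := sub_eq_zero.mp hr
        have h0 := hqe 0 0
        rw [zero_add] at h0
        rw [h0, ← hM, hMeq, Polynomial.eval_mul, Polynomial.eval_pow, Polynomial.eval_C,
          Polynomial.eval_X]
        ring
      · exact hc' c hc v
    obtain ⟨c, hcf⟩ := ih (fun i => β i.succ) (fun i => hβ i.succ)
      (fun i j hij c => hprop i.succ j.succ (fun h => hij (Fin.succ_injective _ h)) c)
      g hg hghom hgvan
    refine ⟨c, fun v => ?_⟩
    rw [hfg v, hcf v, Fin.prod_univ_succ]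
    ring

/-- With `β 1, …, β k` pairwise non-proportional nonzero linear forms
and `σ j` automorphisms fixing `ker (β j)` pointwise, any polynomial function `f`
on `V` that is homogeneous of degree `k` and satisfies `f ∘ σ j = -f` for all `j`
is a scalar multiple of the product `β 1 β 2 ⋯ β k`. -/
theorem eq_smul_prod_linearForms_of_anti_invariant_homogeneous
    {V : Type*} [AddCommGroup V] [Module ℂ V] [FiniteDimensional ℂ V]
    {k : ℕ} (β : Fin k → Module.Dual ℂ V) (hβ : ∀ j, β j ≠ 0)
    (hprop : ∀ i j : Fin k, i ≠ j → ∀ c : ℂ, β i ≠ c • β j)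
    (σ : Fin k → (V ≃ₗ[ℂ] V)) (hσ : ∀ j, ∀ v : V, β j v = 0 → σ j v = v)
    (f : V → ℂ)
    (hf : f ∈ Algebra.adjoin ℂ
      (Set.range fun φ : Module.Dual ℂ V => (φ : V → ℂ)))
    (hhom : ∀ (c : ℂ) (v : V), f (c • v) = c ^ k * f v)
    (hanti : ∀ j, ∀ v : V, f (σ j v) = - f v) :
    ∃ c : ℂ, ∀ v : V, f v = c * ∏ j, β j v := by
  have hvan : ∀ (j : Fin k) (v : V), β j v = 0 → f v = 0 := by
    intro j v hv
    have h := hanti j v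
    rw [hσ j v hv] at h
    have h2 : (2 : ℂ) * f v = 0 := by linear_combination h
    simpa using h2
  exact aux_main k β hβ hprop f hf hhom hvan
end

section
/- Let $V$ be a complex vector space of dimension $2\ell + 1$ equipped with a nondegenerate symmetric bilinear form $B$, and let $e$ be a nilpotent endomorphism of $V$ satisfying $B(e x, y) = -B(x, e y)$ for all $x, y \in V$. Suppose $V = U \oplus U' \oplus U''$, where: $U$ and $U'$ are $e$-invariant totally isotropic subspaces of dimension $\ell - m$ (for some $0 \le m \le \ell$); $U''$ is an $e$-invariant subspace of dimension $2m + 1$ on which $e$ acts with a single Jordan block (that is, $\ker(e|_{U''})$ is one-dimensional); and $B(u'', w) = 0$ for all $u'' \in U''$ and $w \in U \oplus U'$. Set $s = \dim \ker(e|_{U})$ and $r = \ell - s$. Then there exists a chain of totally isotropic subspaces $0 = U_0 \subseteq U_1 \subseteq \cdots \subseteq U_r$ of $V$ with $\dim U_i = i$ for all $i$, $e(U_i) \subseteq U_{i-1}$ for all $1 \le i \le r$, and $e(U_r^{\perp}) \subseteq U_r$, where $U_r^{\perp} = \{v \in V : B(v, u) = 0 \text{ for all } u \in U_r\}$. -/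
open Module Submodule

section Aux

variable {V : Type*} [AddCommGroup V] [Module ℂ V] [FiniteDimensional ℂ V]

/-- Rank–nullity for the restriction of a map to a submodule. -/
lemma aux_rn (f : V →ₗ[ℂ] V) (p : Submodule ℂ V) :
    finrank ℂ (p.map f) + finrank ℂ (p ⊓ LinearMap.ker f : Submodule ℂ V) = finrank ℂ p := by
  have h := LinearMap.finrank_range_add_finrank_ker (f.domRestrict p)
  rw [LinearMap.range_domRestrict, LinearMap.ker_domRestrict] at h
  rw [← h]
  congr 1
  rw [← Submodule.finrank_map_subtype_eq p ((LinearMap.ker f).comap p.subtype),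
    Submodule.map_comap_subtype]

/-- Iterated skew-adjointness. -/
lemma aux_skew_iter (B : V →ₗ[ℂ] V →ₗ[ℂ] ℂ) (e : V →ₗ[ℂ] V)
    (hskew : ∀ x y : V, B (e x) y = - B x (e y)) :
    ∀ (k : ℕ) (x y : V), B ((e ^ k) x) y = (-1 : ℂ) ^ k * B x ((e ^ k) y) := by
  intro k
  induction k with
  | zero => intro x y; simp
  | succ n ih =>
    intro x y
    have h1 : (e ^ (n + 1)) x = (e ^ n) (e x) := by
      rw [pow_succ]; rfl
    have h2 : e ((e ^ n) y) = (e ^ (n + 1)) y := by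
      rw [pow_succ']; rfl
    rw [h1, ih (e x) y, hskew, h2, pow_succ]
    ring

/-- Iterated invariance. -/
lemma aux_inv_iter (e : V →ₗ[ℂ] V) (p : Submodule ℂ V) (hp : p.map e ≤ p) :
    ∀ k : ℕ, p.map (e ^ k) ≤ p := by
  intro k
  induction k with
  | zero => rw [pow_zero, Module.End.one_eq_id, Submodule.map_id]
  | succ n ih =>
    have : e ^ (n + 1) = e.comp (e ^ n) := by rw [pow_succ']; rfl
    rw [this, Submodule.map_comp]
    exact le_trans (Submodule.map_mono ih) hp

/-- A nilpotent map moves a nonzero invariant subspace strictly down. -/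
lemma aux_lt (e : V →ₗ[ℂ] V) (he : IsNilpotent e) (p : Submodule ℂ V)
    (hp0 : p ≠ ⊥) (hp : p.map e ≤ p) : p.map e < p := by
  refine lt_of_le_of_ne hp ?_
  intro heq
  have hall : ∀ k : ℕ, p.map (e ^ k) = p := by
    intro k
    induction k with
    | zero => rw [pow_zero, Module.End.one_eq_id, Submodule.map_id]
    | succ n ih =>
      have : e ^ (n + 1) = e.comp (e ^ n) := by rw [pow_succ']; rfl
      rw [this, Submodule.map_comp, ih, heq]
  obtain ⟨n, hn⟩ := he
  apply hp0
  rw [← hall n, hn, Submodule.map_zero]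

/-- One-step extension of a subspace inside a bigger one. -/
lemma aux_ext1 (p q : Submodule ℂ V) (hpq : p ≤ q) (h : finrank ℂ p < finrank ℂ q) :
    ∃ t, p ≤ t ∧ t ≤ q ∧ finrank ℂ t = finrank ℂ p + 1 := by
  have hne : ¬ q ≤ p := by
    intro hqp
    have := Submodule.finrank_mono hqp
    omega
  obtain ⟨x, hxq, hxp⟩ := SetLike.not_le_iff_exists.mp hne
  have hx0 : x ≠ 0 := fun h0 => hxp (h0 ▸ p.zero_mem)
  refine ⟨p ⊔ Submodule.span ℂ {x}, le_sup_left, sup_le hpq (by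
    rw [Submodule.span_le, Set.singleton_subset_iff]; exact hxq), ?_⟩
  have hinf : p ⊓ Submodule.span ℂ {x} = ⊥ := by
    rw [eq_bot_iff]
    rintro y ⟨hyp, hys⟩
    obtain ⟨c, rfl⟩ := Submodule.mem_span_singleton.mp hys
    rcases eq_or_ne c 0 with rfl | hc
    · simp
    · exact absurd (by simpa [smul_smul, inv_mul_cancel₀ hc] using p.smul_mem c⁻¹ hyp) hxp
  have := Submodule.finrank_sup_add_finrank_inf_eq p (Submodule.span ℂ {x})
  rw [hinf, finrank_bot, finrank_span_singleton hx0] at this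
  omega

/-- Extension to any intermediate dimension. -/
lemma aux_ext (q : Submodule ℂ V) :
    ∀ (j : ℕ) (p : Submodule ℂ V), p ≤ q → finrank ℂ p + j ≤ finrank ℂ q →
      ∃ t, p ≤ t ∧ t ≤ q ∧ finrank ℂ t = finrank ℂ p + j := by
  intro j
  induction j with
  | zero => intro p hpq _; exact ⟨p, le_rfl, hpq, by omega⟩
  | succ n ih =>
    intro p hpq hle
    obtain ⟨t₁, hpt₁, ht₁q, ht₁⟩ := aux_ext1 p q hpq (by omega)
    obtain ⟨t, ht₁t, htq, ht⟩ := ih t₁ ht₁q (by omega)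
    exact ⟨t, le_trans hpt₁ ht₁t, htq, by omega⟩

/-- A complete strictly-lowering flag exists for a nilpotent endomorphism. -/
lemma aux_flag (e : V →ₗ[ℂ] V) (he : IsNilpotent e) :
    ∀ (n : ℕ) (X : Submodule ℂ V), X.map e ≤ X → finrank ℂ X = n →
      ∃ C : ℕ → Submodule ℂ V,
        C 0 = ⊥ ∧ (∀ i, n ≤ i → C i = X) ∧ (∀ i, C i ≤ C (i + 1)) ∧
        (∀ i, i ≤ n → finrank ℂ (C i) = i) ∧ (∀ i, (C (i + 1)).map e ≤ C i) := by
  intro n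
  induction n with
  | zero =>
    intro X _ hX0
    have : X = ⊥ := Submodule.finrank_eq_zero.mp hX0
    exact ⟨fun _ => ⊥, rfl, fun i _ => this.symm, fun i => le_rfl,
      fun i hi => by simpa using (Nat.le_zero.mp hi).symm,
      fun i => by simp⟩
  | succ n ih =>
    intro X hXe hX
    have hX0 : X ≠ ⊥ := by
      intro h; rw [h, finrank_bot] at hX; omega
    have hlt := aux_lt e he X hX0 hXe
    have hfr : finrank ℂ (X.map e) < finrank ℂ X := Submodule.finrank_lt_finrank_of_lt hlt
    obtain ⟨q, hmq, hqX, hq⟩ := aux_ext X (n - finrank ℂ (X.map e)) (X.map e) hlt.le (by omega)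
    have hqn : finrank ℂ q = n := by omega
    have hqe : q.map e ≤ q := le_trans (Submodule.map_mono hqX) hmq
    obtain ⟨C', hC'0, hC'top, hC'mono, hC'dim, hC'low⟩ := ih q hqe hqn
    refine ⟨fun i => if n + 1 ≤ i then X else C' i, ?_, ?_, ?_, ?_, ?_⟩
    · simpa using hC'0
    · intro i hi; simp only [if_pos hi]
    · intro i
      by_cases h1 : n + 1 ≤ i
      · simp only [if_pos h1, if_pos (by omega : n + 1 ≤ i + 1)]
        exact le_rfl
      · rcases Nat.lt_or_ge i n with h2 | h2
        · simp only [if_neg h1, if_neg (by omega : ¬ n + 1 ≤ i + 1)]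
          exact hC'mono i
        · simp only [if_neg h1, if_pos (by omega : n + 1 ≤ i + 1)]
          rw [hC'top i h2]
          exact hqX
    · intro i hi
      by_cases h1 : n + 1 ≤ i
      · dsimp only
        show finrank ℂ (if n + 1 ≤ i then X else C' i : Submodule ℂ V) = i
        rw [if_pos h1]
        omega
      · dsimp only
        show finrank ℂ (if n + 1 ≤ i then X else C' i : Submodule ℂ V) = i
        rw [if_neg h1]
        exact hC'dim i (by omega)
    · intro i
      by_cases h1 : n + 1 ≤ i + 1
      · by_cases h2 : n + 1 ≤ i
        · simp only [if_pos h1, if_pos h2]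
          exact hXe
        · simp only [if_pos h1, if_neg h2]
          rw [hC'top i (by omega)]
          exact hmq
      · simp only [if_neg h1, if_neg (by omega : ¬ n + 1 ≤ i)]
        exact hC'low i

/-- Kernel filtration of a nilpotent operator with at most 1-dimensional kernel
on an invariant subspace grows by exactly one at each step. -/
lemma aux_kerchain (e : V →ₗ[ℂ] V) (he : IsNilpotent e) (W : Submodule ℂ V)
    (hWe : W.map e ≤ W) (h1 : finrank ℂ (W ⊓ LinearMap.ker e : Submodule ℂ V) ≤ 1) :
    ∀ k : ℕ, finrank ℂ (W ⊓ LinearMap.ker (e ^ k) : Submodule ℂ V) = min k (finrank ℂ W) := by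
  have hmono : ∀ k : ℕ, (W ⊓ LinearMap.ker (e ^ k) : Submodule ℂ V) ≤
      W ⊓ LinearMap.ker (e ^ (k + 1)) := by
    intro k x hx
    obtain ⟨hxW, hxk⟩ := Submodule.mem_inf.mp hx
    refine Submodule.mem_inf.mpr ⟨hxW, ?_⟩
    rw [LinearMap.mem_ker, pow_succ', Module.End.mul_apply, LinearMap.mem_ker.mp hxk, map_zero]
  have hupper : ∀ k : ℕ, finrank ℂ (W ⊓ LinearMap.ker (e ^ (k + 1)) : Submodule ℂ V) ≤
      finrank ℂ (W ⊓ LinearMap.ker (e ^ k) : Submodule ℂ V) + 1 := by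
    intro k
    have hrn := aux_rn e (W ⊓ LinearMap.ker (e ^ (k + 1)))
    have hmaple : (W ⊓ LinearMap.ker (e ^ (k + 1)) : Submodule ℂ V).map e ≤
        W ⊓ LinearMap.ker (e ^ k) := by
      rintro _ ⟨x, hx, rfl⟩
      obtain ⟨hxW, hxk⟩ := Submodule.mem_inf.mp hx
      refine Submodule.mem_inf.mpr ⟨hWe (Submodule.mem_map_of_mem hxW), ?_⟩
      rw [LinearMap.mem_ker, ← Module.End.mul_apply, ← pow_succ]
      exact LinearMap.mem_ker.mp hxk
    have hkerle : finrank ℂ ((W ⊓ LinearMap.ker (e ^ (k + 1)) : Submodule ℂ V) ⊓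
        LinearMap.ker e : Submodule ℂ V) ≤ 1 := by
      refine le_trans (Submodule.finrank_mono ?_) h1
      intro x hx
      obtain ⟨hxm, hxe⟩ := Submodule.mem_inf.mp hx
      exact Submodule.mem_inf.mpr ⟨(Submodule.mem_inf.mp hxm).1, hxe⟩
    have := Submodule.finrank_mono hmaple
    omega
  have hstab : ∀ k : ℕ, (W ⊓ LinearMap.ker (e ^ (k + 1)) : Submodule ℂ V) ≤
      W ⊓ LinearMap.ker (e ^ k) → finrank ℂ W ≤
      finrank ℂ (W ⊓ LinearMap.ker (e ^ k) : Submodule ℂ V) := by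
    intro k hk
    have hj : ∀ j : ℕ, (W ⊓ LinearMap.ker (e ^ (k + j)) : Submodule ℂ V) ≤
        W ⊓ LinearMap.ker (e ^ k) := by
      intro j
      induction j with
      | zero => exact le_rfl
      | succ j ih =>
        intro x hx
        obtain ⟨hxW, hxk⟩ := Submodule.mem_inf.mp hx
        have hex : e x ∈ (W ⊓ LinearMap.ker (e ^ (k + j)) : Submodule ℂ V) := by
          refine Submodule.mem_inf.mpr ⟨hWe (Submodule.mem_map_of_mem hxW), ?_⟩
          rw [LinearMap.mem_ker, ← Module.End.mul_apply, ← pow_succ]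
          exact LinearMap.mem_ker.mp hxk
        have hex2 := Submodule.mem_inf.mp (ih hex)
        refine hk (Submodule.mem_inf.mpr ⟨hxW, ?_⟩)
        rw [LinearMap.mem_ker, pow_succ, Module.End.mul_apply]
        exact LinearMap.mem_ker.mp hex2.2
    obtain ⟨n₀, hn₀⟩ := he
    have hW : W ≤ W ⊓ LinearMap.ker (e ^ (k + n₀)) := by
      intro x hxW
      refine Submodule.mem_inf.mpr ⟨hxW, ?_⟩
      rw [LinearMap.mem_ker, pow_add, Module.End.mul_apply, hn₀]
      simp
    exact Submodule.finrank_mono (le_trans hW (hj n₀))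
  intro k
  induction k with
  | zero =>
    rw [pow_zero, Module.End.one_eq_id, LinearMap.ker_id]
    simp
  | succ k ih =>
    rcases le_or_gt (finrank ℂ W) k with hk | hk
    · have heqW : (W ⊓ LinearMap.ker (e ^ k) : Submodule ℂ V) = W := by
        apply Submodule.eq_of_le_of_finrank_le inf_le_left
        omega
      have heqW1 : (W ⊓ LinearMap.ker (e ^ (k + 1)) : Submodule ℂ V) = W := by
        refine le_antisymm inf_le_left ?_
        conv_lhs => rw [← heqW]
        exact hmono k
      rw [heqW1]
      omega
    · have h1' := hupper k
      have h2' := Submodule.finrank_mono (hmono k)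
      by_cases hle : finrank ℂ (W ⊓ LinearMap.ker (e ^ (k + 1)) : Submodule ℂ V) ≤ k
      · have heq : (W ⊓ LinearMap.ker (e ^ k) : Submodule ℂ V) =
            W ⊓ LinearMap.ker (e ^ (k + 1)) :=
          Submodule.eq_of_le_of_finrank_le (hmono k) (by omega)
        have := hstab k heq.ge
        omega
      · omega

end Aux



/-- type B: Let `V` be a `(2ℓ+1)`-dimensional complex vector space
with a nondegenerate symmetric bilinear form `B`, and let `e` be a nilpotent
endomorphism with `B (e x) y = - B x (e y)`. Given a decomposition
`V = U ⊕ U' ⊕ U''` as in the statement (with `U, U'` `e`-invariant totally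
isotropic of dimension `ℓ - m`, `U''` `e`-invariant of dimension `2m+1` with a
single Jordan block, perpendicular to `U ⊕ U'`), and with
`s = dim ker (e|_U)`, `r = ℓ - s`, there is a chain of totally isotropic subspaces
`0 = C 0 ⊆ ⋯ ⊆ C r` with `dim (C i) = i`, `e (C i) ⊆ C (i-1)`, and
`e ((C r)^⊥) ⊆ C r`. -/
theorem exists_isotropic_flag_typeB
    {V : Type*} [AddCommGroup V] [Module ℂ V] [FiniteDimensional ℂ V]
    {ℓ m : ℕ} (hm : m ≤ ℓ) (hdim : Module.finrank ℂ V = 2 * ℓ + 1)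
    (B : V →ₗ[ℂ] V →ₗ[ℂ] ℂ)
    (hsymm : ∀ x y : V, B x y = B y x)
    (hnd : ∀ x : V, (∀ y : V, B x y = 0) → x = 0)
    (e : V →ₗ[ℂ] V) (he : IsNilpotent e)
    (hskew : ∀ x y : V, B (e x) y = - B x (e y))
    (U U' U'' : Submodule ℂ V)
    (hsup : U ⊔ U' ⊔ U'' = ⊤)
    (hU : Module.finrank ℂ U = ℓ - m) (hU' : Module.finrank ℂ U' = ℓ - m)
    (hU'' : Module.finrank ℂ U'' = 2 * m + 1)
    (hUe : Submodule.map e U ≤ U) (hU'e : Submodule.map e U' ≤ U')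
    (hU''e : Submodule.map e U'' ≤ U'')
    (hUiso : ∀ x ∈ U, ∀ y ∈ U, B x y = 0)
    (hU'iso : ∀ x ∈ U', ∀ y ∈ U', B x y = 0)
    (hJordan : Module.finrank ℂ (U'' ⊓ LinearMap.ker e : Submodule ℂ V) = 1)
    (hperp : ∀ x ∈ U'', ∀ w ∈ U ⊔ U', B x w = 0)
    {s r : ℕ} (hs : Module.finrank ℂ (U ⊓ LinearMap.ker e : Submodule ℂ V) = s)
    (hrs : r = ℓ - s) :
    ∃ C : ℕ → Submodule ℂ V,
      C 0 = ⊥ ∧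
      (∀ i : ℕ, i < r → C i ≤ C (i + 1)) ∧
      (∀ i : ℕ, i ≤ r → Module.finrank ℂ (C i) = i) ∧
      (∀ i : ℕ, i ≤ r → ∀ x ∈ C i, ∀ y ∈ C i, B x y = 0) ∧
      (∀ i : ℕ, 1 ≤ i → i ≤ r → Submodule.map e (C i) ≤ C (i - 1)) ∧
      (∀ v : V, (∀ u ∈ C r, B v u = 0) → e v ∈ C r) := by
  classical
  -- s is at most ℓ - m
  have hsle : s ≤ ℓ - m := by
    have h := Submodule.finrank_mono (inf_le_left : U ⊓ LinearMap.ker e ≤ U)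
    rw [hs, hU] at h
    exact h
  -- the three pieces are independent
  have hsupfr := Submodule.finrank_sup_add_finrank_inf_eq U U'
  have htopfr := Submodule.finrank_sup_add_finrank_inf_eq (U ⊔ U') U''
  rw [hsup, finrank_top, hdim, hU''] at htopfr
  rw [hU, hU'] at hsupfr
  have hbot : ((U ⊔ U') ⊓ U'' : Submodule ℂ V) = ⊥ :=
    Submodule.finrank_eq_zero.mp (by omega)
  -- kernel chain on U''
  have hch : ∀ k : ℕ, finrank ℂ (U'' ⊓ LinearMap.ker (e ^ k) : Submodule ℂ V)
      = min k (2 * m + 1) := by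
    intro k
    rw [aux_kerchain e he U'' hU''e (le_of_eq hJordan) k, hU'']
  have hc : U'' ≤ LinearMap.ker (e ^ (2 * m + 1)) := by
    have h := hch (2 * m + 1)
    have heq : (U'' ⊓ LinearMap.ker (e ^ (2 * m + 1)) : Submodule ℂ V) = U'' :=
      Submodule.eq_of_le_of_finrank_le inf_le_left (by rw [h, hU'']; omega)
    intro x hx
    have hxx : x ∈ (U'' ⊓ LinearMap.ker (e ^ (2 * m + 1)) : Submodule ℂ V) := heq.ge hx
    exact (Submodule.mem_inf.mp hxx).2
  have hYU'' : Submodule.map (e ^ (m + 1)) U'' ≤ U'' := aux_inv_iter e U'' hU''e (m + 1)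
  have hYfr : finrank ℂ (Submodule.map (e ^ (m + 1)) U'') = m := by
    have h := aux_rn (e ^ (m + 1)) U''
    have h2 := hch (m + 1)
    rw [hU''] at h
    omega
  have hYker : Submodule.map (e ^ (m + 1)) U'' = U'' ⊓ LinearMap.ker (e ^ m) := by
    apply Submodule.eq_of_le_of_finrank_le
    · refine le_inf hYU'' ?_
      rintro y hy
      obtain ⟨x, hx, rfl⟩ := Submodule.mem_map.mp hy
      rw [LinearMap.mem_ker, ← Module.End.mul_apply, ← pow_add]
      have hmm : m + (m + 1) = 2 * m + 1 := by omega
      rw [hmm]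
      exact LinearMap.mem_ker.mp (hc hx)
    · rw [hYfr, hch m]
      omega
  -- the subspace X = e(U) + e^{m+1}(U'')
  have hXY : (Submodule.map e U ⊓ Submodule.map (e ^ (m + 1)) U'' : Submodule ℂ V) = ⊥ := by
    rw [eq_bot_iff]
    intro x hx
    obtain ⟨h1x, h2x⟩ := Submodule.mem_inf.mp hx
    have hxmem : x ∈ ((U ⊔ U') ⊓ U'' : Submodule ℂ V) :=
      Submodule.mem_inf.mpr ⟨Submodule.mem_sup_left (hUe h1x), hYU'' h2x⟩
    rw [hbot] at hxmem
    exact hxmem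
  have hUfr : finrank ℂ (Submodule.map e U) = ℓ - m - s := by
    have h := aux_rn e U
    rw [hU, hs] at h
    omega
  have hXfr : finrank ℂ (Submodule.map e U ⊔ Submodule.map (e ^ (m + 1)) U'' : Submodule ℂ V)
      = r := by
    have h := Submodule.finrank_sup_add_finrank_inf_eq
      (Submodule.map e U) (Submodule.map (e ^ (m + 1)) U'')
    rw [hXY, finrank_bot, hUfr, hYfr] at h
    omega
  have hXe : Submodule.map e (Submodule.map e U ⊔ Submodule.map (e ^ (m + 1)) U'') ≤
      Submodule.map e U ⊔ Submodule.map (e ^ (m + 1)) U'' := by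
    rw [Submodule.map_sup]
    apply sup_le
    · exact le_sup_of_le_left (Submodule.map_mono hUe)
    · refine le_sup_of_le_right ?_
      rw [hYker]
      rintro y hy
      obtain ⟨x, hx, rfl⟩ := Submodule.mem_map.mp hy
      obtain ⟨hxU'', hxk⟩ := Submodule.mem_inf.mp hx
      refine Submodule.mem_inf.mpr ⟨hU''e (Submodule.mem_map_of_mem hxU''), ?_⟩
      rw [LinearMap.mem_ker, ← Module.End.mul_apply, ← pow_succ, pow_succ', Module.End.mul_apply,
        LinearMap.mem_ker.mp hxk, map_zero]
  have hYmem : ∀ y ∈ Submodule.map (e ^ (m + 1)) U'', y ∈ U'' ∧ (e ^ m) y = 0 := by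
    intro y hy
    have h := Submodule.mem_inf.mp (hYker.le hy)
    exact ⟨h.1, LinearMap.mem_ker.mp h.2⟩
  have hXiso : ∀ x ∈ (Submodule.map e U ⊔ Submodule.map (e ^ (m + 1)) U'' : Submodule ℂ V),
      ∀ y ∈ (Submodule.map e U ⊔ Submodule.map (e ^ (m + 1)) U'' : Submodule ℂ V),
      B x y = 0 := by
    intro x hx y hy
    obtain ⟨a, ha, b, hb, rfl⟩ := Submodule.mem_sup.mp hx
    obtain ⟨a', ha', b', hb', rfl⟩ := Submodule.mem_sup.mp hy
    have haU : a ∈ U := hUe ha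
    have ha'U : a' ∈ U := hUe ha'
    have hbU'' : b ∈ U'' := hYU'' hb
    have hb'U'' : b' ∈ U'' := hYU'' hb'
    have h1 : B a a' = 0 := hUiso a haU a' ha'U
    have h2 : B a b' = 0 := by
      rw [hsymm]
      exact hperp b' hb'U'' a (Submodule.mem_sup_left haU)
    have h3 : B b a' = 0 := hperp b hbU'' a' (Submodule.mem_sup_left ha'U)
    have h4 : B b b' = 0 := by
      obtain ⟨w, hw, rfl⟩ := Submodule.mem_map.mp hb
      rw [aux_skew_iter B e hskew (m + 1) w b']
      have hb'0 : (e ^ (m + 1)) b' = 0 := by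
        rw [pow_succ', Module.End.mul_apply, (hYmem b' hb').2, map_zero]
      rw [hb'0, map_zero, mul_zero]
    simp [map_add, LinearMap.add_apply, h1, h2, h3, h4]
  have hdecomp : ∀ v : V, ∃ u u' w, u ∈ U ∧ u' ∈ U' ∧ w ∈ U'' ∧ v = u + u' + w := by
    intro v
    have hv : v ∈ (⊤ : Submodule ℂ V) := Submodule.mem_top
    rw [← hsup] at hv
    obtain ⟨p, hp, w, hw, rfl⟩ := Submodule.mem_sup.mp hv
    obtain ⟨u, hu, u', hu', rfl⟩ := Submodule.mem_sup.mp hp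
    exact ⟨u, u', w, hu, hu', hw, rfl⟩
  have hXperp : ∀ v : V,
      (∀ u ∈ (Submodule.map e U ⊔ Submodule.map (e ^ (m + 1)) U'' : Submodule ℂ V), B v u = 0) →
      e v ∈ (Submodule.map e U ⊔ Submodule.map (e ^ (m + 1)) U'' : Submodule ℂ V) := by
    intro v hv
    obtain ⟨u, u', w, hu, hu', hw, rfl⟩ := hdecomp v
    have hu'0 : e u' = 0 := by
      apply hnd
      intro z
      obtain ⟨z1, z2, z3, hz1, hz2, hz3, rfl⟩ := hdecomp z
      have hA : B (e u') z1 = 0 := by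
        have hEz1U : e z1 ∈ U := hUe (Submodule.mem_map_of_mem hz1)
        have h0 : B (u + u' + w) (e z1) = 0 :=
          hv (e z1) (Submodule.mem_sup_left (Submodule.mem_map_of_mem hz1))
        have t1 : B u (e z1) = 0 := hUiso u hu (e z1) hEz1U
        have t3 : B w (e z1) = 0 := hperp w hw (e z1) (Submodule.mem_sup_left hEz1U)
        have hexp : B (u + u' + w) (e z1) = B u (e z1) + B u' (e z1) + B w (e z1) := by
          simp [map_add, LinearMap.add_apply]
        rw [hexp, t1, t3] at h0
        have hB' : B u' (e z1) = 0 := by linear_combination h0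
        rw [hskew, hB', neg_zero]
      have hEu' : e u' ∈ U' := hU'e (Submodule.mem_map_of_mem hu')
      have hB2 : B (e u') z2 = 0 := hU'iso (e u') hEu' z2 hz2
      have hB3 : B (e u') z3 = 0 := by
        rw [hsymm]
        exact hperp z3 hz3 (e u') (Submodule.mem_sup_right hEu')
      simp [map_add, hA, hB2, hB3]
    have hw0 : (e ^ (m + 1)) w = 0 := by
      apply hnd
      intro z
      obtain ⟨z1, z2, z3, hz1, hz2, hz3, rfl⟩ := hdecomp z
      have hin : (e ^ (m + 1)) w ∈ U'' := aux_inv_iter e U'' hU''e (m + 1) (Submodule.mem_map_of_mem hw)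
      have hB1 : B ((e ^ (m + 1)) w) z1 = 0 := hperp _ hin z1 (Submodule.mem_sup_left hz1)
      have hB2 : B ((e ^ (m + 1)) w) z2 = 0 := hperp _ hin z2 (Submodule.mem_sup_right hz2)
      have hB3 : B ((e ^ (m + 1)) w) z3 = 0 := by
        rw [aux_skew_iter B e hskew (m + 1) w z3]
        have hz3' : (e ^ (m + 1)) z3 ∈ Submodule.map (e ^ (m + 1)) U'' :=
          Submodule.mem_map_of_mem hz3
        have h0 : B (u + u' + w) ((e ^ (m + 1)) z3) = 0 := hv _ (Submodule.mem_sup_right hz3')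
        have hz3U'' : (e ^ (m + 1)) z3 ∈ U'' := hYU'' hz3'
        have t1 : B u ((e ^ (m + 1)) z3) = 0 := by
          rw [hsymm]
          exact hperp _ hz3U'' u (Submodule.mem_sup_left hu)
        have t2 : B u' ((e ^ (m + 1)) z3) = 0 := by
          rw [hsymm]
          exact hperp _ hz3U'' u' (Submodule.mem_sup_right hu')
        have hexp : B (u + u' + w) ((e ^ (m + 1)) z3) =
            B u ((e ^ (m + 1)) z3) + B u' ((e ^ (m + 1)) z3) + B w ((e ^ (m + 1)) z3) := by
          simp [map_add, LinearMap.add_apply]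
        rw [hexp, t1, t2] at h0
        have hBw : B w ((e ^ (m + 1)) z3) = 0 := by linear_combination h0
        rw [hBw, mul_zero]
      simp [map_add, hB1, hB2, hB3]
    have hew : e w ∈ Submodule.map (e ^ (m + 1)) U'' := by
      rw [hYker]
      refine Submodule.mem_inf.mpr ⟨hU''e (Submodule.mem_map_of_mem hw), ?_⟩
      rw [LinearMap.mem_ker, ← Module.End.mul_apply, ← pow_succ]
      exact hw0
    have heq : e (u + u' + w) = e u + e w := by
      rw [map_add, map_add, hu'0, add_zero]
    rw [heq]
    exact Submodule.add_mem _ (Submodule.mem_sup_left (Submodule.mem_map_of_mem hu))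
      (Submodule.mem_sup_right hew)
  -- assemble the flag
  obtain ⟨C, hC0, hCtop, hCmono, hCdim, hClow⟩ :=
    aux_flag e he r (Submodule.map e U ⊔ Submodule.map (e ^ (m + 1)) U'') hXe hXfr
  have hCle : ∀ i j : ℕ, i ≤ j → C i ≤ C j := by
    intro i j hij
    induction hij with
    | refl => exact le_rfl
    | step _ ih => exact le_trans ih (hCmono _)
  have hCX : ∀ i : ℕ, C i ≤ Submodule.map e U ⊔ Submodule.map (e ^ (m + 1)) U'' := by
    intro i
    rcases le_or_gt i r with h | h
    · exact le_trans (hCle i r h) (le_of_eq (hCtop r le_rfl))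
    · exact le_of_eq (hCtop i h.le)
  refine ⟨C, hC0, fun i _ => hCmono i, fun i hi => hCdim i hi, ?_, ?_, ?_⟩
  · intro i _ x hx y hy
    exact hXiso x (hCX i hx) y (hCX i hy)
  · intro i hi1 _
    have h := hClow (i - 1)
    rwa [Nat.sub_add_cancel hi1] at h
  · intro v hvperp
    rw [hCtop r le_rfl]
    apply hXperp
    intro z hz
    exact hvperp z (by rw [hCtop r le_rfl]; exact hz)
end

section
/- Let $V$ be a complex vector space of dimension $2\ell$ equipped with a nondegenerate alternating (symplectic) bilinear form $B$, and let $e$ be a nilpotent endomorphism of $V$ satisfying $B(e x, y) = -B(x, e y)$ for all $x, y \in V$. Suppose $V = U \oplus U' \oplus U''$, where: $U$ and $U'$ are $e$-invariant totally isotropic subspaces of dimension $\ell - m$ (for some $0 \le m \le \ell$); $U''$ is an $e$-invariant subspace of dimension $2m$ on which $e$ acts with a single Jordan block (that is, $\ker(e|_{U''})$ is one-dimensional, with the convention that $U''$ may be zero when $m = 0$); and $B(u'', w) = 0$ for all $u'' \in U''$ and $w \in U \oplus U'$. Set $s = \dim \ker(e|_{U})$ and $r = \ell - s$. Then there exists a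 chain of totally isotropic subspaces $0 = U_0 \subseteq U_1 \subseteq \cdots \subseteq U_r$ of $V$ with $\dim U_i = i$ for all $i$, $e(U_i) \subseteq U_{i-1}$ for all $1 \le i \le r$, and $e(U_r^{\perp}) \subseteq U_r$, where $U_r^{\perp} = \{v \in V : B(v, u) = 0 \text{ for all } u \in U_r\}$. -/
open Module Submodule

section auxC
variable {V : Type*} [AddCommGroup V] [Module ℂ V] [FiniteDimensional ℂ V]

/-- Rank-nullity for the image of a submodule. -/
lemma auxC_finrank_map_add (e : V →ₗ[ℂ] V) (W : Submodule ℂ V) :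
    finrank ℂ (Submodule.map e W) +
      finrank ℂ (W ⊓ LinearMap.ker e : Submodule ℂ V) = finrank ℂ W := by
  have h := LinearMap.finrank_range_add_finrank_ker (e.domRestrict W)
  rw [LinearMap.range_domRestrict] at h
  have hk : LinearMap.ker (e.domRestrict W)
      = Submodule.comap W.subtype (W ⊓ LinearMap.ker e) := by
    ext x
    simp [LinearMap.mem_ker, x.2]
  rw [hk, (Submodule.comapSubtypeEquivOfLe (inf_le_left :
      W ⊓ LinearMap.ker e ≤ W)).finrank_eq] at h
  simpa using h

omit [FiniteDimensional ℂ V] in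
/-- For a nilpotent map, the image of a nonzero invariant submodule is strictly smaller. -/
lemma auxC_map_lt (e : V →ₗ[ℂ] V) (he : IsNilpotent e) {W : Submodule ℂ V}
    (hW : Submodule.map e W ≤ W) (hne : W ≠ ⊥) : Submodule.map e W < W := by
  rcases hW.lt_or_eq with h | h
  · exact h
  · exfalso
    obtain ⟨n, hn⟩ := he
    have key : ∀ k : ℕ, Submodule.map (e ^ k) W = W := by
      intro k
      induction k with
      | zero => simp [Module.End.one_eq_id, Submodule.map_id]
      | succ k ih =>
        rw [pow_succ, Module.End.mul_eq_comp, Submodule.map_comp, h, ih]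
    have := key n
    rw [hn] at this
    simp only [Submodule.map_zero] at this
    exact hne this.symm

/-- One can grow a submodule to any intermediate dimension. -/
lemma auxC_exists_inter (j : ℕ) :
    ∀ (P W : Submodule ℂ V), P ≤ W → finrank ℂ P + j ≤ finrank ℂ W →
    ∃ Q : Submodule ℂ V, P ≤ Q ∧ Q ≤ W ∧ finrank ℂ Q = finrank ℂ P + j := by
  induction j with
  | zero => exact fun P W hPW _ => ⟨P, le_rfl, hPW, by simp⟩
  | succ j ih =>
    intro P W hPW hj
    have hlt : P < W := by
      refine lt_of_le_of_ne hPW ?_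
      rintro rfl
      omega
    obtain ⟨x, hxW, hxP⟩ := SetLike.exists_of_lt hlt
    have hx0 : x ≠ 0 := by rintro rfl; exact hxP P.zero_mem
    have hinf : P ⊓ (ℂ ∙ x) = ⊥ := by
      rw [eq_bot_iff]
      rintro y ⟨hyP, hy⟩
      obtain ⟨c, rfl⟩ := Submodule.mem_span_singleton.mp hy
      rcases eq_or_ne c 0 with rfl | hc
      · simp
      · have : c⁻¹ • c • x ∈ P := P.smul_mem c⁻¹ hyP
        rw [smul_smul, inv_mul_cancel₀ hc, one_smul] at this
        exact absurd this hxP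
    have hrank : finrank ℂ ↥(P ⊔ (ℂ ∙ x)) = finrank ℂ P + 1 := by
      have := Submodule.finrank_sup_add_finrank_inf_eq P (ℂ ∙ x)
      rw [hinf, finrank_span_singleton hx0] at this
      simpa using this
    have hle : P ⊔ (ℂ ∙ x) ≤ W := sup_le hPW ((Submodule.span_singleton_le_iff_mem x W).mpr hxW)
    obtain ⟨Q, h1, h2, h3⟩ := ih (P ⊔ (ℂ ∙ x)) W hle (by omega)
    exact ⟨Q, le_trans le_sup_left h1, h2, by omega⟩

/-- A complete flag adapted to a nilpotent endomorphism inside an invariant subspace. -/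
lemma auxC_flag (e : V →ₗ[ℂ] V) (he : IsNilpotent e) :
    ∀ (n : ℕ) (W : Submodule ℂ V), finrank ℂ W = n → Submodule.map e W ≤ W →
    ∃ C : ℕ → Submodule ℂ V, C n = W ∧ C 0 = ⊥ ∧
      (∀ i, i < n → C i ≤ C (i + 1)) ∧
      (∀ i, i ≤ n → finrank ℂ (C i) = i) ∧
      (∀ i, 1 ≤ i → i ≤ n → Submodule.map e (C i) ≤ C (i - 1)) ∧
      (∀ i, i ≤ n → C i ≤ W) := by
  intro n
  induction n with
  | zero =>
    intro W hW _
    have hWbot : W = ⊥ := Submodule.finrank_eq_zero.mp hW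
    exact ⟨fun _ => ⊥, hWbot.symm, rfl, by omega, fun i hi => by
      interval_cases i; simp, by omega, fun i hi => bot_le⟩
  | succ n ih =>
    intro W hW hWe
    have hne : W ≠ ⊥ := by
      intro h
      rw [h, finrank_bot] at hW
      omega
    have hlt := auxC_map_lt e he hWe hne
    have hrlt : finrank ℂ (Submodule.map e W) < n + 1 := by
      rw [← hW]
      exact Submodule.finrank_lt_finrank_of_lt hlt
    obtain ⟨W', hPW', hW'W, hW'rank⟩ := auxC_exists_inter
      (n - finrank ℂ (Submodule.map e W)) (Submodule.map e W) W hlt.le (by omega)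
    have hW'n : finrank ℂ W' = n := by omega
    have hW'e : Submodule.map e W' ≤ W' :=
      le_trans (Submodule.map_mono hW'W) hPW'
    obtain ⟨C, hCn, hC0, hChain, hCdim, hCmap, hCle⟩ := ih W' hW'n hW'e
    refine ⟨fun i => if i = n + 1 then W else C i, by simp, ?_, ?_, ?_, ?_, ?_⟩
    · dsimp only
      rw [if_neg (by omega)]
      exact hC0
    · intro i hi
      dsimp only
      rcases eq_or_lt_of_le (Nat.lt_succ_iff.mp hi) with h | h
      · subst h
        rw [if_neg (by omega), if_pos rfl, hCn]
        exact hW'W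
      · rw [if_neg (by omega), if_neg (by omega)]
        exact hChain i (by omega)
    · intro i hi
      dsimp only
      rcases Nat.lt_succ_iff_lt_or_eq.mp (Nat.lt_succ_of_le hi) with h | h
      · show finrank ℂ ↥(if i = n + 1 then W else C i) = i
        rw [if_neg (by omega)]
        exact hCdim i (by omega)
      · subst h
        show finrank ℂ ↥(if n + 1 = n + 1 then W else C (n + 1)) = n + 1
        rw [if_pos rfl]
        exact hW
    · intro i h1 hi
      dsimp only
      rcases Nat.lt_succ_iff_lt_or_eq.mp (Nat.lt_succ_of_le hi) with h | h
      · rw [if_neg (by omega), if_neg (by omega)]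
        exact hCmap i h1 (by omega)
      · subst h
        rw [if_pos rfl, if_neg (by omega)]
        have hn1 : (n + 1 - 1) = n := by omega
        rw [hn1, hCn]
        exact hPW'
    · intro i hi
      dsimp only
      rcases Nat.lt_succ_iff_lt_or_eq.mp (Nat.lt_succ_of_le hi) with h | h
      · rw [if_neg (by omega)]
        exact le_trans (hCle i (by omega)) hW'W
      · subst h
        rw [if_pos rfl]

end auxC



/-- type C: Let `V` be a `2ℓ`-dimensional complex vector space with
a nondegenerate alternating (symplectic) bilinear form `B`, and let `e` be a
nilpotent endomorphism with `B (e x) y = - B x (e y)`. Given a decomposition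
`V = U ⊕ U' ⊕ U''` as in the statement (with `U, U'` `e`-invariant totally
isotropic of dimension `ℓ - m`, `U''` `e`-invariant of dimension `2m` with a
single Jordan block — possibly zero when `m = 0` —, perpendicular to `U ⊕ U'`),
and with `s = dim ker (e|_U)`, `r = ℓ - s`, there is a chain of totally isotropic
subspaces `0 = C 0 ⊆ ⋯ ⊆ C r` with `dim (C i) = i`, `e (C i) ⊆ C (i-1)`, and
`e ((C r)^⊥) ⊆ C r`. -/
theorem exists_isotropic_flag_typeC
    {V : Type*} [AddCommGroup V] [Module ℂ V] [FiniteDimensional ℂ V]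
    {ℓ m : ℕ} (hm : m ≤ ℓ) (hdim : Module.finrank ℂ V = 2 * ℓ)
    (B : V →ₗ[ℂ] V →ₗ[ℂ] ℂ)
    (halt : ∀ x : V, B x x = 0)
    (hnd : ∀ x : V, (∀ y : V, B x y = 0) → x = 0)
    (e : V →ₗ[ℂ] V) (he : IsNilpotent e)
    (hskew : ∀ x y : V, B (e x) y = - B x (e y))
    (U U' U'' : Submodule ℂ V)
    (hsup : U ⊔ U' ⊔ U'' = ⊤)
    (hU : Module.finrank ℂ U = ℓ - m) (hU' : Module.finrank ℂ U' = ℓ - m)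
    (hU'' : Module.finrank ℂ U'' = 2 * m)
    (hUe : Submodule.map e U ≤ U) (hU'e : Submodule.map e U' ≤ U')
    (hU''e : Submodule.map e U'' ≤ U'')
    (hUiso : ∀ x ∈ U, ∀ y ∈ U, B x y = 0)
    (hU'iso : ∀ x ∈ U', ∀ y ∈ U', B x y = 0)
    (hJordan : U'' = ⊥ ∨
      Module.finrank ℂ (U'' ⊓ LinearMap.ker e : Submodule ℂ V) = 1)
    (hperp : ∀ x ∈ U'', ∀ w ∈ U ⊔ U', B x w = 0)
    {s r : ℕ} (hs : Module.finrank ℂ (U ⊓ LinearMap.ker e : Submodule ℂ V) = s)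
    (hrs : r = ℓ - s) :
    ∃ C : ℕ → Submodule ℂ V,
      C 0 = ⊥ ∧
      (∀ i : ℕ, i < r → C i ≤ C (i + 1)) ∧
      (∀ i : ℕ, i ≤ r → Module.finrank ℂ (C i) = i) ∧
      (∀ i : ℕ, i ≤ r → ∀ x ∈ C i, ∀ y ∈ C i, B x y = 0) ∧
      (∀ i : ℕ, 1 ≤ i → i ≤ r → Submodule.map e (C i) ≤ C (i - 1)) ∧
      (∀ v : V, (∀ u ∈ C r, B v u = 0) → e v ∈ C r) := by
  classical
  -- skew symmetry of B
  have hBs : ∀ x y : V, B x y = - B y x := by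
    intro x y
    have h := halt (x + y)
    simp only [map_add, LinearMap.add_apply] at h
    rw [halt x, halt y] at h
    linear_combination h
  -- iterated skew symmetry
  have hskew_pow : ∀ (k : ℕ) (x y : V), B ((e ^ k) x) y = (-1 : ℂ) ^ k * B x ((e ^ k) y) := by
    intro k
    induction k with
    | zero => intro x y; simp
    | succ k ih =>
      intro x y
      have h1 : (e ^ (k + 1)) x = (e ^ k) (e x) := by
        rw [pow_succ, Module.End.mul_apply]
      have h2 : (e ^ (k + 1)) y = e ((e ^ k) y) := by
        rw [pow_succ', Module.End.mul_apply]
      rw [h1, ih (e x) y, hskew, h2]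
      ring
  -- directness from dimensions
  have htop : finrank ℂ (⊤ : Submodule ℂ V) = 2 * ℓ := by
    rw [finrank_top]; exact hdim
  have hsum1 := Submodule.finrank_sup_add_finrank_inf_eq U U'
  have hsum2 := Submodule.finrank_sup_add_finrank_inf_eq (U ⊔ U') U''
  rw [hsup, htop, hU''] at hsum2
  rw [hU, hU'] at hsum1
  have hUU'le : finrank ℂ ((U ⊔ U') ⊓ U'' : Submodule ℂ V) = 0 := by omega
  have hUU''bot : (U ⊔ U') ⊓ U'' = ⊥ := Submodule.finrank_eq_zero.mp hUU'le
  have hUinterU'' : U ⊓ U'' = ⊥ := by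
    rw [eq_bot_iff, ← hUU''bot]
    exact inf_le_inf_right _ le_sup_left
  -- the Lagrangian L of U''
  obtain ⟨L, hLle, hLinv, hLrank, hLiso, hLchar⟩ :
      ∃ L : Submodule ℂ V, L ≤ U'' ∧ Submodule.map e L ≤ L ∧
        finrank ℂ L = m ∧ (∀ x ∈ L, ∀ y ∈ L, B x y = 0) ∧
        (∀ x ∈ U'', (∀ l ∈ L, B x l = 0) → x ∈ L) := by
    set Lk : ℕ → Submodule ℂ V := fun k => Submodule.map (e ^ k) U'' with hLk_def
    have hLk0 : Lk 0 = U'' := by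
      simp [hLk_def, Module.End.one_eq_id, Submodule.map_id]
    have hLk_succ : ∀ k, Lk (k + 1) = Submodule.map e (Lk k) := by
      intro k
      simp only [hLk_def]
      rw [pow_succ', Module.End.mul_eq_comp, Submodule.map_comp]
    have hLk_le : ∀ k, Lk k ≤ U'' := by
      intro k
      induction k with
      | zero => rw [hLk0]
      | succ k ih => rw [hLk_succ]; exact le_trans (Submodule.map_mono ih) hU''e
    have hLk_inv : ∀ k, Submodule.map e (Lk k) ≤ Lk k := by
      intro k
      rw [← hLk_succ]
      simp only [hLk_def]
      rw [pow_succ, Module.End.mul_eq_comp, Submodule.map_comp]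
      exact Submodule.map_mono hU''e
    refine ⟨Lk m, hLk_le m, hLk_inv m, ?_⟩
    rcases hJordan with hbot | hker
    · have hm0 : m = 0 := by
        rw [hbot, finrank_bot] at hU''
        omega
      have hLbot : Lk m = ⊥ := by
        rw [eq_bot_iff]
        exact le_trans (hLk_le m) (le_of_eq hbot)
      refine ⟨by rw [hLbot, finrank_bot, hm0], ?_, ?_⟩
      · intro x hx y hy
        rw [hLbot] at hx
        rw [Submodule.mem_bot] at hx
        rw [hx]
        simp
      · intro x hx _
        rw [hbot] at hx
        rw [hLbot]
        exact hx
    · -- Jordan block case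
      have hdrop : ∀ k, finrank ℂ (Lk k) ≤ finrank ℂ (Lk (k + 1)) + 1 := by
        intro k
        have h := auxC_finrank_map_add e (Lk k)
        rw [← hLk_succ] at h
        have hk1 : finrank ℂ ((Lk k ⊓ LinearMap.ker e) : Submodule ℂ V) ≤ 1 := by
          rw [← hker]
          exact Submodule.finrank_mono (inf_le_inf_right _ (hLk_le k))
        omega
      have hlower : ∀ k, finrank ℂ U'' ≤ finrank ℂ (Lk k) + k := by
        intro k
        induction k with
        | zero => rw [hLk0]; omega
        | succ k ih => have := hdrop k; omega
      have hstrict : ∀ k, Lk k = ⊥ ∨ finrank ℂ (Lk k) + k ≤ 2 * m := by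
        intro k
        induction k with
        | zero => right; rw [hLk0, hU'']; omega
        | succ k ih =>
          rcases eq_or_ne (Lk k) ⊥ with hb | hb
          · left; rw [hLk_succ, hb, Submodule.map_bot]
          · rcases ih with h | h
            · exact absurd h hb
            · right
              have := Submodule.finrank_lt_finrank_of_lt
                (auxC_map_lt e he (hLk_inv k) hb)
              rw [← hLk_succ] at this
              omega
      have h2m : Lk (2 * m) = ⊥ := by
        rcases hstrict (2 * m) with h | h
        · exact h
        · apply Submodule.finrank_eq_zero.mp; omega
      have hupper : finrank ℂ (Lk m) ≤ m := by
        rcases hstrict m with h | h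
        · rw [h, finrank_bot]; omega
        · omega
      have hLrank : finrank ℂ (Lk m) = m := by
        have := hlower m
        rw [hU''] at this
        omega
      have hz : ∀ b ∈ U'', (e ^ (2 * m)) b = 0 := by
        intro b hb
        have hmem : (e ^ (2 * m)) b ∈ Lk (2 * m) := Submodule.mem_map_of_mem hb
        rw [h2m, Submodule.mem_bot] at hmem
        exact hmem
      have hLiso : ∀ x ∈ Lk m, ∀ y ∈ Lk m, B x y = 0 := by
        intro x hx y hy
        obtain ⟨a, ha, rfl⟩ := Submodule.mem_map.mp hx
        obtain ⟨b, hb, rfl⟩ := Submodule.mem_map.mp hy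
        rw [hskew_pow m a ((e ^ m) b)]
        have hcomp : (e ^ m) ((e ^ m) b) = (e ^ (2 * m)) b := by
          rw [← Module.End.mul_apply, ← pow_add]
          ring_nf
        rw [hcomp, hz b hb]
        simp
      refine ⟨hLrank, hLiso, ?_⟩
      -- characterization of L as its own orthogonal in U''
      have hBcnd : (LinearMap.BilinForm.restrict B U'').Nondegenerate := by
        refine LinearMap.BilinForm.Nondegenerate.ofSeparatingLeft ?_
        intro x hx
        have hx' : ∀ y ∈ U'', B (x : V) y = 0 := by
          intro y hy
          have := hx ⟨y, hy⟩
          rwa [LinearMap.BilinForm.restrict_apply] at this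
        have hx0 : (x : V) = 0 := by
          apply hnd
          intro y
          have hy : y ∈ U ⊔ U' ⊔ U'' := by rw [hsup]; trivial
          obtain ⟨w, hw, c, hc, rfl⟩ := Submodule.mem_sup.mp hy
          rw [map_add, hperp (x : V) x.2 w hw, hx' c hc]
          ring
        exact Subtype.ext hx0
      have hBcrefl : (LinearMap.BilinForm.restrict B U'').IsRefl := by
        intro x y h
        simp only [LinearMap.BilinForm.restrict_apply, LinearMap.domRestrict_apply] at h ⊢
        rw [hBs, h]
        ring
      set Lc : Submodule ℂ U'' := Submodule.comap U''.subtype (Lk m) with hLc_def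
      have hLcrank : finrank ℂ Lc = m := by
        rw [hLc_def, (Submodule.comapSubtypeEquivOfLe (hLk_le m)).finrank_eq, hLrank]
      have horth := LinearMap.BilinForm.finrank_orthogonal hBcnd Lc
      rw [hLcrank, hU''] at horth
      have hLc_le_orth : Lc ≤ (LinearMap.BilinForm.restrict B U'').orthogonal Lc := by
        intro x hx
        rw [LinearMap.BilinForm.mem_orthogonal_iff]
        intro n hn
        have : B (n : V) (x : V) = 0 := hLiso (n : V) hn (x : V) hx
        simpa [LinearMap.BilinForm.IsOrtho, LinearMap.BilinForm.restrict_apply] using this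
      have horth_eq : (LinearMap.BilinForm.restrict B U'').orthogonal Lc = Lc := by
        refine (Submodule.eq_of_le_of_finrank_le hLc_le_orth ?_).symm
        rw [horth, hLcrank]
        omega
      intro x hx hxl
      have hmem : (⟨x, hx⟩ : U'') ∈ (LinearMap.BilinForm.restrict B U'').orthogonal Lc := by
        rw [LinearMap.BilinForm.mem_orthogonal_iff]
        intro n hn
        have hnl : (n : V) ∈ Lk m := hn
        have : B x (n : V) = 0 := hxl (n : V) hnl
        have h2 : B (n : V) x = 0 := by rw [hBs, this]; ring
        simpa [LinearMap.BilinForm.IsOrtho, LinearMap.BilinForm.restrict_apply] using h2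
      rw [horth_eq] at hmem
      exact hmem
  -- the subspace C r
  have hmapU : finrank ℂ (Submodule.map e U) + s = ℓ - m := by
    have h := auxC_finrank_map_add e U
    rw [hs, hU] at h
    exact h
  set Cr : Submodule ℂ V := Submodule.map e U ⊔ L with hCr_def
  have hmapUL : Submodule.map e U ⊓ L = ⊥ := by
    rw [eq_bot_iff, ← hUinterU'']
    exact inf_le_inf hUe hLle
  have hCr_rank : finrank ℂ Cr = r := by
    have h := Submodule.finrank_sup_add_finrank_inf_eq (Submodule.map e U) L
    rw [hmapUL, finrank_bot, hLrank] at h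
    rw [hCr_def]
    omega
  have hCr_inv : Submodule.map e Cr ≤ Cr := by
    rw [hCr_def, Submodule.map_sup]
    apply sup_le
    · exact le_trans (Submodule.map_mono hUe) le_sup_left
    · exact le_trans hLinv le_sup_right
  have hCr_iso : ∀ x ∈ Cr, ∀ y ∈ Cr, B x y = 0 := by
    intro x hx y hy
    rw [hCr_def] at hx hy
    obtain ⟨p, hp, q, hq, rfl⟩ := Submodule.mem_sup.mp hx
    obtain ⟨p2, hp2, q2, hq2, rfl⟩ := Submodule.mem_sup.mp hy
    have hpU : p ∈ U := hUe hp
    have hp2U : p2 ∈ U := hUe hp2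
    have hqU : q ∈ U'' := hLle hq
    have hq2U : q2 ∈ U'' := hLle hq2
    have e1 : B p p2 = 0 := hUiso p hpU p2 hp2U
    have e2 : B p q2 = 0 := by
      rw [hBs, hperp q2 hq2U p (Submodule.mem_sup_left hpU)]
      ring
    have e3 : B q p2 = 0 := hperp q hqU p2 (Submodule.mem_sup_left hp2U)
    have e4 : B q q2 = 0 := hLiso q hq q2 hq2
    simp [map_add, LinearMap.add_apply, e1, e2, e3, e4]
  obtain ⟨C, hCr_eq, hC0, hchain, hdims, hmaps, hle⟩ := auxC_flag e he r Cr hCr_rank hCr_inv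
  refine ⟨C, hC0, hchain, hdims, ?_, hmaps, ?_⟩
  · intro i hi x hx y hy
    exact hCr_iso x (hle i hi hx) y (hle i hi hy)
  · intro v hv
    rw [hCr_eq] at hv ⊢
    have hvtop : v ∈ U ⊔ U' ⊔ U'' := by rw [hsup]; trivial
    obtain ⟨p, hp, c, hc, hvdec⟩ := Submodule.mem_sup.mp hvtop
    obtain ⟨b, hb, b', hb', hpdec⟩ := Submodule.mem_sup.mp hp
    have hvv : v = b + b' + c := by rw [← hvdec, ← hpdec]
    -- the U''-component lies in L
    have hcL : c ∈ L := by
      apply hLchar c hc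
      intro l hl
      have h1 : B v l = 0 := hv l (Submodule.mem_sup_right hl)
      have h2 : B b l = 0 := by
        rw [hBs, hperp l (hLle hl) b (Submodule.mem_sup_left hb)]
        ring
      have h3 : B b' l = 0 := by
        rw [hBs, hperp l (hLle hl) b' (Submodule.mem_sup_right hb')]
        ring
      rw [hvv] at h1
      simp only [map_add, LinearMap.add_apply, h2, h3, zero_add] at h1
      exact h1
    -- the U'-component is killed by e
    have heb' : e b' = 0 := by
      apply hnd
      intro y
      have hytop : y ∈ U ⊔ U' ⊔ U'' := by rw [hsup]; trivial
      obtain ⟨q, hq, cy, hcy, hydec⟩ := Submodule.mem_sup.mp hytop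
      obtain ⟨cu, hcu, cu', hcu', hqdec⟩ := Submodule.mem_sup.mp hq
      have k1 : B (e b') cu = 0 := by
        have hev : B (e v) cu = 0 := by
          rw [hskew]
          have hecu : e cu ∈ Cr :=
            Submodule.mem_sup_left (Submodule.mem_map_of_mem hcu)
          rw [hv (e cu) hecu]
          ring
        have hev2 : e v = e b + e b' + e c := by rw [hvv]; simp [map_add]
        have t1 : B (e b) cu = 0 :=
          hUiso (e b) (hUe (Submodule.mem_map_of_mem hb)) cu hcu
        have t2 : B (e c) cu = 0 :=
          hperp (e c) (hU''e (Submodule.mem_map_of_mem (hLle hcL))) cu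
            (Submodule.mem_sup_left hcu)
        rw [hev2] at hev
        simp only [map_add, LinearMap.add_apply, t1, t2, zero_add, add_zero] at hev
        exact hev
      have k2 : B (e b') cu' = 0 :=
        hU'iso (e b') (hU'e (Submodule.mem_map_of_mem hb')) cu' hcu'
      have k3 : B (e b') cy = 0 := by
        rw [hBs, hperp cy hcy (e b')
          (Submodule.mem_sup_right (hU'e (Submodule.mem_map_of_mem hb')))]
        ring
      have hy' : y = cu + cu' + cy := by rw [← hydec, ← hqdec]
      rw [hy']
      simp [map_add, k1, k2, k3]
    have hev : e v = e b + e c := by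
      rw [hvv]
      simp [map_add, heb']
    rw [hev]
    exact Submodule.add_mem _
      (Submodule.mem_sup_left (Submodule.mem_map_of_mem hb))
      (Submodule.mem_sup_right (hLinv (Submodule.mem_map_of_mem hcL)))
end

section
/- Let $V$ be a complex vector space of dimension $2\ell + 1$ equipped with a nondegenerate symmetric bilinear form $B$, and let $e$ be a nilpotent endomorphism of $V$ satisfying $B(e x, y) = -B(x, e y)$ for all $x, y \in V$. Suppose $V = U \oplus U' \oplus U''$, where: $U$ and $U'$ are $e$-invariant totally isotropic subspaces of dimension $\ell - m$ (for some $0 \le m \le \ell$); $U''$ is an $e$-invariant subspace of dimension $2m + 1$ with $\ker(e|_{U''})$ one-dimensional; and $B(u'', w) = 0$ for all $u'' \in U''$ and $w \in U \oplus U'$. Let $U''' = e^{m+1}(U'')$ and set $T = e(U) \oplus U'''$. Then $T^{\perp} = U \oplus \ker(e|_{U'}) \oplus (e^{-1}(U''') \cap U'')$ and $e(T^{\perp}) = T$, where $T^{\perp} = \{v \in V : B(v, t) = 0 \text{ for all } t \in T\}$ and $e^{-1}(U''') = \{v \in V : e(v) \in U'''\}$. -/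
open Module Submodule

private lemma aux_ker_pow_succ_le {K W : Type*} [Field K] [AddCommGroup W] [Module K W]
    [FiniteDimensional K W] (f : Module.End K W) (k : ℕ) :
    finrank K (LinearMap.ker (f ^ (k + 1))) ≤
      finrank K (LinearMap.ker (f ^ k)) + finrank K (LinearMap.ker f) := by
  set p := LinearMap.ker (f ^ (k + 1)) with hp
  let g : p →ₗ[K] W := f ∘ₗ p.subtype
  have hrange : LinearMap.range g ≤ LinearMap.ker (f ^ k) := by
    rintro _ ⟨⟨x, hx⟩, rfl⟩
    have hx' : (f ^ (k + 1)) x = 0 := hx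
    have : (f ^ k) (f x) = (f ^ (k + 1)) x := by rw [pow_succ]; rfl
    simp only [LinearMap.mem_ker]
    show (f ^ k) (f x) = 0
    rw [this, hx']
  have hker : finrank K (LinearMap.ker g) ≤ finrank K (LinearMap.ker f) := by
    rw [← Submodule.finrank_map_subtype_eq p (LinearMap.ker g)]
    apply Submodule.finrank_mono
    rintro _ ⟨y, hy, rfl⟩
    exact hy
  have hrn := LinearMap.finrank_range_add_finrank_ker g
  have h1 : finrank K (LinearMap.range g) ≤ finrank K (LinearMap.ker (f ^ k)) :=
    Submodule.finrank_mono hrange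
  omega

private lemma aux_jordan_ker_pow {K W : Type*} [Field K] [AddCommGroup W] [Module K W]
    [FiniteDimensional K W] (f : Module.End K W) (hf : IsNilpotent f)
    (h1 : finrank K (LinearMap.ker f) = 1) :
    ∀ k ≤ finrank K W, finrank K (LinearMap.ker (f ^ k)) = k := by
  have hub : ∀ k, finrank K (LinearMap.ker (f ^ k)) ≤ k := by
    intro k
    induction k with
    | zero => simp [Module.End.one_eq_id, LinearMap.ker_id]
    | succ k ih =>
      have := aux_ker_pow_succ_le f k
      omega
  have htop : LinearMap.ker (f ^ finrank K W) = ⊤ := by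
    obtain ⟨N, hN⟩ := hf
    have h2 : LinearMap.ker (f ^ max N (finrank K W)) = LinearMap.ker (f ^ finrank K W) :=
      Module.End.ker_pow_eq_ker_pow_finrank_of_le (le_max_right _ _)
    rw [← h2, eq_top_iff]
    intro x _
    have h3 : f ^ max N (finrank K W) = f ^ (max N (finrank K W) - N) * f ^ N := by
      rw [← pow_add, Nat.sub_add_cancel (le_max_left _ _)]
    simp only [LinearMap.mem_ker, h3, hN, mul_zero, LinearMap.zero_apply]
  have htopfin : finrank K (LinearMap.ker (f ^ finrank K W)) = finrank K W := by
    rw [htop, finrank_top]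
  have hlb : ∀ d k, k + d = finrank K W → k ≤ finrank K (LinearMap.ker (f ^ k)) := by
    intro d
    induction d with
    | zero =>
      intro k hk
      rw [Nat.add_zero] at hk
      subst hk
      exact htopfin.ge
    | succ d ih =>
      intro k hk
      have h2 := ih (k + 1) (by omega)
      have h3 := aux_ker_pow_succ_le f k
      omega
  intro k hk
  exact le_antisymm (hub k) (hlb (finrank K W - k) k (by omega))
/-- type B, perpendicular computation: In the setting of the type-B
decomposition `V = U ⊕ U' ⊕ U''`, with `U''' = e^{m+1}(U'')` and
`T = e(U) ⊕ U'''`, one has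
`T^⊥ = U ⊕ ker (e|_{U'}) ⊕ (e⁻¹(U''') ∩ U'')` and `e (T^⊥) = T`. -/
theorem perp_of_typeB_flag_building_subspace
    {V : Type*} [AddCommGroup V] [Module ℂ V] [FiniteDimensional ℂ V]
    {ℓ m : ℕ} (hm : m ≤ ℓ) (hdim : Module.finrank ℂ V = 2 * ℓ + 1)
    (B : V →ₗ[ℂ] V →ₗ[ℂ] ℂ)
    (hsymm : ∀ x y : V, B x y = B y x)
    (hnd : ∀ x : V, (∀ y : V, B x y = 0) → x = 0)
    (e : V →ₗ[ℂ] V) (he : IsNilpotent e)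
    (hskew : ∀ x y : V, B (e x) y = - B x (e y))
    (U U' U'' : Submodule ℂ V)
    (hsup : U ⊔ U' ⊔ U'' = ⊤)
    (hU : Module.finrank ℂ U = ℓ - m) (hU' : Module.finrank ℂ U' = ℓ - m)
    (hU'' : Module.finrank ℂ U'' = 2 * m + 1)
    (hUe : Submodule.map e U ≤ U) (hU'e : Submodule.map e U' ≤ U')
    (hU''e : Submodule.map e U'' ≤ U'')
    (hUiso : ∀ x ∈ U, ∀ y ∈ U, B x y = 0)
    (hU'iso : ∀ x ∈ U', ∀ y ∈ U', B x y = 0)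
    (hJordan : Module.finrank ℂ (U'' ⊓ LinearMap.ker e : Submodule ℂ V) = 1)
    (hperp : ∀ x ∈ U'', ∀ w ∈ U ⊔ U', B x w = 0)
    (U''' : Submodule ℂ V) (hU''' : U''' = Submodule.map (e ^ (m + 1)) U'')
    (T : Submodule ℂ V) (hT : T = Submodule.map e U ⊔ U''')
    (Tperp : Submodule ℂ V)
    (hTperp : ∀ v : V, v ∈ Tperp ↔ ∀ t ∈ T, B v t = 0) :
    Tperp = U ⊔ (U' ⊓ LinearMap.ker e) ⊔ (Submodule.comap e U''' ⊓ U'') ∧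
      Submodule.map e Tperp = T := by
  classical
  have hUmem : ∀ x ∈ U, e x ∈ U := fun x hx => hUe ⟨x, hx, rfl⟩
  have hU'mem : ∀ x ∈ U', e x ∈ U' := fun x hx => hU'e ⟨x, hx, rfl⟩
  have hU''mem : ∀ x ∈ U'', e x ∈ U'' := fun x hx => hU''e ⟨x, hx, rfl⟩
  have hU''pow : ∀ (k : ℕ), ∀ x ∈ U'', (e ^ k) x ∈ U'' := fun k x hx =>
    Module.End.pow_apply_mem_of_forall_mem k hU''mem x hx
  have hdecomp : ∀ v : V, ∃ a ∈ U, ∃ b ∈ U', ∃ c ∈ U'', v = a + b + c := by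
    intro v
    have hv : v ∈ U ⊔ U' ⊔ U'' := by rw [hsup]; trivial
    obtain ⟨w, hw, c, hc, hvw⟩ := Submodule.mem_sup.mp hv
    obtain ⟨a, ha, b, hb, hab⟩ := Submodule.mem_sup.mp hw
    exact ⟨a, ha, b, hb, c, hc, by rw [← hvw, ← hab]⟩
  have hskew_pow : ∀ (k : ℕ) (x y : V), B x ((e ^ k) y) = (-1 : ℂ) ^ k * B ((e ^ k) x) y := by
    intro k
    induction k with
    | zero => intro x y; simp
    | succ k ih =>
      intro x y
      have h1 : (e ^ (k + 1)) y = (e ^ k) (e y) := by rw [pow_succ]; rfl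
      have h2 : (e ^ (k + 1)) x = e ((e ^ k) x) := by rw [pow_succ']; rfl
      have h3 : B ((e ^ k) x) (e y) = - B (e ((e ^ k) x)) y := by rw [hskew]; ring
      rw [h1, ih x (e y), h2, h3]
      ring
  have keyU' : ∀ z ∈ U', (∀ u ∈ U, B u z = 0) → z = 0 := by
    intro z hz h
    apply hnd
    intro y
    obtain ⟨a, ha, b, hb, c, hc, rfl⟩ := hdecomp y
    have h1 : B z a = 0 := by rw [hsymm]; exact h a ha
    have h2 : B z b = 0 := hU'iso z hz b hb
    have h3 : B z c = 0 := by rw [hsymm]; exact hperp c hc z (Submodule.mem_sup_right hz)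
    simp [map_add, h1, h2, h3]
  have keyU'' : ∀ z ∈ U'', (∀ x ∈ U'', B z x = 0) → z = 0 := by
    intro z hz h
    apply hnd
    intro y
    obtain ⟨a, ha, b, hb, c, hc, rfl⟩ := hdecomp y
    have h1 : B z a = 0 := hperp z hz a (Submodule.mem_sup_left ha)
    have h2 : B z b = 0 := hperp z hz b (Submodule.mem_sup_right hb)
    simp [map_add, h1, h2, h c hc]
  -- Jordan theory for e restricted to U''
  set f : Module.End ℂ U'' := e.restrict hU''mem with hfdef
  have hfpow : ∀ (k : ℕ) (x : U''), ((f ^ k) x : V) = (e ^ k) (x : V) := by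
    intro k x
    rw [hfdef, Module.End.pow_restrict]
    rfl
  have hfnil : IsNilpotent f := by
    obtain ⟨N, hN⟩ := he
    refine ⟨N, ?_⟩
    ext x
    rw [hfpow, hN]
    simp
  have hfrank : Module.finrank ℂ U'' = 2 * m + 1 := hU''
  have hker1 : Module.finrank ℂ (LinearMap.ker f) = 1 := by
    have h1 : LinearMap.ker f = (LinearMap.ker e).comap U''.subtype :=
      LinearMap.ker_restrict hU''mem
    rw [h1, ← Submodule.finrank_map_subtype_eq U'' ((LinearMap.ker e).comap U''.subtype),
      Submodule.map_comap_subtype]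
    exact hJordan
  have hkerpow := aux_jordan_ker_pow f hfnil hker1
  have hfK : f ^ (2 * m + 1) = 0 := by
    have h1 : Module.finrank ℂ (LinearMap.ker (f ^ (2 * m + 1))) = 2 * m + 1 :=
      hkerpow _ (by rw [hfrank])
    have h2 : LinearMap.ker (f ^ (2 * m + 1)) = ⊤ :=
      Submodule.eq_top_of_finrank_eq (by rw [h1, hfrank])
    exact LinearMap.ker_eq_top.mp h2
  have hJ1 : ∀ x ∈ U'', (e ^ (2 * m + 1)) x = 0 := by
    intro x hx
    have h1 := hfpow (2 * m + 1) ⟨x, hx⟩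
    rw [hfK] at h1
    simpa using h1.symm
  have hrangeker : LinearMap.ker (f ^ (m + 1)) = LinearMap.range (f ^ m) := by
    have hle : LinearMap.range (f ^ m) ≤ LinearMap.ker (f ^ (m + 1)) := by
      rintro _ ⟨x, rfl⟩
      simp only [LinearMap.mem_ker]
      have h1 : (f ^ (m + 1)) ((f ^ m) x) = (f ^ (2 * m + 1)) x := by
        have hmm : m + 1 + m = 2 * m + 1 := by omega
        rw [← Module.End.mul_apply, ← pow_add, hmm]
      rw [h1, hfK]
      simp
    have h1 : Module.finrank ℂ (LinearMap.range (f ^ m)) = m + 1 := by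
      have h2 := LinearMap.finrank_range_add_finrank_ker (f ^ m)
      have h3 : Module.finrank ℂ (LinearMap.ker (f ^ m)) = m :=
        hkerpow m (by rw [hfrank]; omega)
      rw [hfrank] at h2
      omega
    have h2 : Module.finrank ℂ (LinearMap.ker (f ^ (m + 1))) = m + 1 :=
      hkerpow (m + 1) (by rw [hfrank]; omega)
    exact (Submodule.eq_of_le_of_finrank_eq hle (by rw [h1, h2])).symm
  have hJ2 : ∀ c ∈ U'', (e ^ (m + 1)) c = 0 → ∃ z ∈ U'', (e ^ m) z = c := by
    intro c hc h0
    have h1 : (⟨c, hc⟩ : U'') ∈ LinearMap.ker (f ^ (m + 1)) := by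
      simp only [LinearMap.mem_ker]
      exact Subtype.ext (by rw [hfpow]; exact h0)
    rw [hrangeker] at h1
    obtain ⟨z, hz⟩ := h1
    refine ⟨z, z.2, ?_⟩
    have h2 := hfpow m z
    rw [hz] at h2
    exact h2.symm
  -- membership characterization of Tperp
  have hmemT : ∀ v : V, v ∈ Tperp ↔
      ((∀ u ∈ U, B v (e u) = 0) ∧ ∀ x ∈ U'', B v ((e ^ (m + 1)) x) = 0) := by
    intro v
    rw [hTperp]
    constructor
    · intro h
      constructor
      · intro u hu
        exact h _ (by rw [hT]; exact Submodule.mem_sup_left (Submodule.mem_map_of_mem hu))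
      · intro x hx
        refine h _ ?_
        rw [hT, hU''']
        exact Submodule.mem_sup_right (Submodule.mem_map_of_mem hx)
    · rintro ⟨h1, h2⟩ t ht
      rw [hT] at ht
      obtain ⟨t1, ht1, t2, ht2, rfl⟩ := Submodule.mem_sup.mp ht
      obtain ⟨u, hu, rfl⟩ := ht1
      rw [hU'''] at ht2
      obtain ⟨x, hx, rfl⟩ := ht2
      rw [map_add, h1 u hu, h2 x hx, add_zero]
  have hsecond : ∀ b ∈ U', (∀ u ∈ U, B b (e u) = 0) → e b = 0 := by
    intro b hb h
    apply keyU' (e b) (hU'mem b hb)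
    intro u hu
    have h3 := hskew u b
    rw [hsymm (e u) b, h u hu] at h3
    exact neg_eq_zero.mp h3.symm
  have hsecond' : ∀ b ∈ U', e b = 0 → ∀ u ∈ U, B b (e u) = 0 := by
    intro b hb h0 u hu
    rw [hsymm b (e u), hskew u b, h0, map_zero, neg_zero]
  have hthird_fwd : ∀ c ∈ U'', (∀ x ∈ U'', B c ((e ^ (m + 1)) x) = 0) → e c ∈ U''' := by
    intro c hc h
    have h0 : (e ^ (m + 1)) c = 0 := by
      apply keyU'' _ (hU''pow (m + 1) c hc)
      intro x hx
      have h1 := hskew_pow (m + 1) c x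
      rw [h x hx] at h1
      have h2 : ((-1 : ℂ) ^ (m + 1)) ≠ 0 := pow_ne_zero _ (by norm_num)
      exact (mul_eq_zero.mp h1.symm).resolve_left h2
    obtain ⟨z, hz, hez⟩ := hJ2 c hc h0
    rw [hU''']
    refine ⟨z, hz, ?_⟩
    rw [pow_succ', Module.End.mul_apply, hez]
  have hthird_bwd : ∀ c ∈ U'', e c ∈ U''' → ∀ x ∈ U'', B c ((e ^ (m + 1)) x) = 0 := by
    intro c hc hec x hx
    rw [hskew_pow (m + 1) c x]
    rw [hU'''] at hec
    obtain ⟨w, hw, hew⟩ := hec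
    have h1 : (e ^ (m + 1)) c = (e ^ (2 * m + 1)) w := by
      have h2 : (e ^ (m + 1)) c = (e ^ m) (e c) := by rw [pow_succ, Module.End.mul_apply]
      have hmm : m + (m + 1) = 2 * m + 1 := by omega
      rw [h2, ← hew, ← Module.End.mul_apply, ← pow_add, hmm]
    rw [h1, hJ1 w hw]
    simp
  have hR_le : U ⊔ (U' ⊓ LinearMap.ker e) ⊔ (Submodule.comap e U''' ⊓ U'') ≤ Tperp := by
    refine sup_le (sup_le ?_ ?_) ?_
    · intro a ha
      rw [hmemT]
      refine ⟨fun u hu => hUiso a ha (e u) (hUmem u hu), fun x hx => ?_⟩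
      rw [hsymm]
      exact hperp _ (hU''pow (m + 1) x hx) a (Submodule.mem_sup_left ha)
    · rintro b ⟨hb, hbk⟩
      rw [hmemT]
      refine ⟨hsecond' b hb (LinearMap.mem_ker.mp hbk), fun x hx => ?_⟩
      rw [hsymm]
      exact hperp _ (hU''pow (m + 1) x hx) b (Submodule.mem_sup_right hb)
    · rintro c ⟨hc1, hc2⟩
      rw [hmemT]
      exact ⟨fun u hu => hperp c hc2 (e u) (Submodule.mem_sup_left (hUmem u hu)),
        hthird_bwd c hc2 (Submodule.mem_comap.mp hc1)⟩
  have hfirst : Tperp = U ⊔ (U' ⊓ LinearMap.ker e) ⊔ (Submodule.comap e U''' ⊓ U'') := by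
    apply le_antisymm _ hR_le
    intro v hv
    rw [hmemT] at hv
    obtain ⟨h1, h2⟩ := hv
    obtain ⟨a, ha, b, hb, c, hc, rfl⟩ := hdecomp v
    have hBexp : ∀ w : V, B (a + b + c) w = B a w + B b w + B c w := by
      intro w; simp [map_add]
    have hbu : ∀ u ∈ U, B b (e u) = 0 := by
      intro u hu
      have h3 := h1 u hu
      rw [hBexp, hUiso a ha (e u) (hUmem u hu),
        hperp c hc (e u) (Submodule.mem_sup_left (hUmem u hu)), zero_add, add_zero] at h3
      exact h3
    have hcx : ∀ x ∈ U'', B c ((e ^ (m + 1)) x) = 0 := by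
      intro x hx
      have h3 := h2 x hx
      have hte : (e ^ (m + 1)) x ∈ U'' := hU''pow (m + 1) x hx
      have ha' : B a ((e ^ (m + 1)) x) = 0 := by
        rw [hsymm]; exact hperp _ hte a (Submodule.mem_sup_left ha)
      have hb' : B b ((e ^ (m + 1)) x) = 0 := by
        rw [hsymm]; exact hperp _ hte b (Submodule.mem_sup_right hb)
      rw [hBexp, ha', hb', zero_add, zero_add] at h3
      exact h3
    have hbmem : b ∈ U' ⊓ LinearMap.ker e :=
      ⟨hb, LinearMap.mem_ker.mpr (hsecond b hb hbu)⟩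
    have hcmem : c ∈ Submodule.comap e U''' ⊓ U'' :=
      ⟨Submodule.mem_comap.mpr (hthird_fwd c hc hcx), hc⟩
    exact Submodule.add_mem _
      (Submodule.add_mem _ (Submodule.mem_sup_left (Submodule.mem_sup_left ha))
        (Submodule.mem_sup_left (Submodule.mem_sup_right hbmem)))
      (Submodule.mem_sup_right hcmem)
  refine ⟨hfirst, ?_⟩
  rw [hfirst, Submodule.map_sup, Submodule.map_sup, hT]
  have hm1 : Submodule.map e (U' ⊓ LinearMap.ker e) = ⊥ := by
    rw [eq_bot_iff]
    rintro _ ⟨x, ⟨_, hxk⟩, rfl⟩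
    simpa using LinearMap.mem_ker.mp hxk
  have hm2 : Submodule.map e (Submodule.comap e U''' ⊓ U'') = U''' := by
    apply le_antisymm
    · rintro _ ⟨x, ⟨hx1, _⟩, rfl⟩
      exact hx1
    · intro t ht
      rw [hU'''] at ht
      obtain ⟨w, hw, rfl⟩ := ht
      refine ⟨(e ^ m) w, ⟨Submodule.mem_comap.mpr ?_, hU''pow m w hw⟩, ?_⟩
      · rw [hU''']
        exact ⟨w, hw, by rw [pow_succ', Module.End.mul_apply]⟩
      · rw [pow_succ', Module.End.mul_apply]
  rw [hm1, hm2, sup_bot_eq]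
end
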